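/- arXiv:2002.03338 — 5 statements merged into one kernel-verified Lean document; each statement's English description precedes it below -/
import Mathlib

section
/- For every field k and every finite group G, there exist infinitely many pairwise non-isomorphic finite-dimensional regular evolution algebras X over k (i.e., evolution algebras with X² = X) such that the group of algebra automorphisms of X is isomorphic to G. -/
/-- A finite-dimensional evolution algebra over a field `k`: a finite-dimensional
`k`-vector space equipped with a `k`-bilinear commutative multiplication admitting a
natural basis, i.e. a basis whose distinct elements multiply to zero. -/
structure EvolutionAlgebra (k : Type u) [Field k] : Type (u + 1) where
  carrier : Type u
  [isAddCommGroup : AddCommGroup carrier]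
  [isModule : Module k carrier]
  mul : carrier →ₗ[k] carrier →ₗ[k] carrier
  mul_comm : ∀ x y : carrier, mul x y = mul y x
  [isFiniteDimensional : FiniteDimensional k carrier]
  natural : ∃ (ι : Type u) (_ : Fintype ι) (b : Module.Basis ι k carrier),
      ∀ i j, i ≠ j → mul (b i) (b j) = 0

attribute [instance] EvolutionAlgebra.isAddCommGroup EvolutionAlgebra.isModule
  EvolutionAlgebra.isFiniteDimensional

/-- `X` is regular if `X² = X`, i.e. the span of all products is everything. -/
def EvolutionAlgebra.IsRegular {k : Type u} [Field k] (A : EvolutionAlgebra k) : Prop :=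
  Submodule.span k {z : A.carrier | ∃ x y : A.carrier, z = A.mul x y} = ⊤

/-- Isomorphism of evolution algebras: a `k`-linear bijection commuting with
the multiplications. -/
def EvolutionAlgebra.Iso {k : Type u} [Field k] (A B : EvolutionAlgebra k) : Prop :=
  ∃ e : A.carrier ≃ₗ[k] B.carrier, ∀ x y : A.carrier, e (A.mul x y) = B.mul (e x) (e y)

/-- The automorphism group of an evolution algebra: the subgroup of `k`-linear
bijections of the carrier commuting with the multiplication. -/
def EvolutionAlgebra.Aut {k : Type u} [Field k] (A : EvolutionAlgebra k) :
    Subgroup (A.carrier ≃ₗ[k] A.carrier) where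
  carrier := {f | ∀ x y : A.carrier, f (A.mul x y) = A.mul (f x) (f y)}
  one_mem' := by intro x y; rfl
  mul_mem' := by
    intro f g hf hg x y
    show f (g (A.mul x y)) = A.mul (f (g x)) (f (g y))
    rw [hg, hf]
  inv_mem' := by
    intro f hf x y
    apply f.injective
    show f (f.symm (A.mul x y)) = f (A.mul (f.symm x) (f.symm y))
    rw [hf]
    simp

set_option linter.unusedSectionVars false

namespace EvoConstr

section Graph

variable (G' : Type) [Group G'] [Fintype G'] [DecidableEq G']

/-- "color" of a group element: a natural number in `[2, card G' + 1]`. -/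
noncomputable def tcol (s : G') : ℕ := ((Fintype.equivFin G') s : ℕ) + 2

lemma tcol_ge (s : G') : 2 ≤ tcol G' s := Nat.le_add_left 2 _

lemma tcol_le (s : G') : tcol G' s ≤ Fintype.card G' + 1 := by
  have := ((Fintype.equivFin G') s).isLt
  unfold tcol; omega

lemma tcol_inj : Function.Injective (tcol G') := by
  intro a b h
  have : (Fintype.equivFin G') a = (Fintype.equivFin G') b := by
    apply Fin.ext; unfold tcol at h; omega
  exact (Fintype.equivFin G').injective this

variable (K : ℕ)

/-- The digraph: loops, chains `(g,i) → (g,i+1)`, and cross edges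
`(g,0) → (g*s, tcol s)`. -/
def Rel (v w : G' × Fin K) : Prop :=
  (v.1 = w.1 ∧ ((w.2 : ℕ) = (v.2 : ℕ) ∨ (w.2 : ℕ) = (v.2 : ℕ) + 1)) ∨
  ((v.2 : ℕ) = 0 ∧ ∃ s : G', w.1 = v.1 * s ∧ (w.2 : ℕ) = tcol G' s)

variable {G' K}

lemma rel_refl (v : G' × Fin K) : Rel G' K v v := Or.inl ⟨rfl, Or.inl rfl⟩

lemma tcol_lt (hK : Fintype.card G' + 2 ≤ K) (s : G') : tcol G' s < K := by
  have := tcol_le G' s; omega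

/-- non-loop edges strictly increase the level -/
lemma rel_lt {v w : G' × Fin K} (h : Rel G' K v w) (hne : v ≠ w) :
    (v.2 : ℕ) < (w.2 : ℕ) := by
  rcases h with ⟨h1, h2 | h2⟩ | ⟨h0, s, hs1, hs2⟩
  · exact absurd (Prod.ext h1 (Fin.ext h2.symm)) (by simpa using hne)
  · omega
  · have := tcol_ge G' s; omega

/-- chain edge -/
lemma rel_chain {g : G'} {i j : Fin K} (h : (j : ℕ) = (i : ℕ) + 1) :
    Rel G' K (g, i) (g, j) := Or.inl ⟨rfl, Or.inr h⟩

/-- cross edge -/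
lemma rel_cross {g : G'} {i j : Fin K} (s : G') (h0 : (i : ℕ) = 0)
    (hj : (j : ℕ) = tcol G' s) : Rel G' K (g, i) (g * s, j) :=
  Or.inr ⟨h0, s, rfl, hj⟩

/-- A vertex has an incoming non-loop edge iff its level is nonzero. -/
def HasIn (w : G' × Fin K) : Prop := ∃ v, Rel G' K v w ∧ v ≠ w

lemma hasIn_iff {w : G' × Fin K} : HasIn w ↔ (w.2 : ℕ) ≠ 0 := by
  constructor
  · rintro ⟨v, hv, hne⟩
    have := rel_lt hv hne
    omega
  · intro h0
    have hlt : (w.2 : ℕ) - 1 < K := by omega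
    refine ⟨(w.1, ⟨(w.2 : ℕ) - 1, hlt⟩), Or.inl ⟨rfl, Or.inr ?_⟩, ?_⟩
    · simp; omega
    · intro he
      have : ((w.2 : ℕ) - 1) = (w.2 : ℕ) := by
        have := congrArg (fun p => ((Prod.snd p : Fin K) : ℕ)) he
        simpa using this
      omega

/-- A vertex is at level one iff it has an incoming edge and all its in-neighbours are
sources. -/
def LevelOne (w : G' × Fin K) : Prop :=
  HasIn w ∧ ∀ v, Rel G' K v w → v ≠ w → ¬ HasIn v

lemma levelOne_iff {w : G' × Fin K} : LevelOne w ↔ (w.2 : ℕ) = 1 := by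
  constructor
  · rintro ⟨h1, h2⟩
    have h0 : (w.2 : ℕ) ≠ 0 := hasIn_iff.1 h1
    by_contra hne1
    have h2' : 2 ≤ (w.2 : ℕ) := by omega
    have hlt : (w.2 : ℕ) - 1 < K := by omega
    set v : G' × Fin K := (w.1, ⟨(w.2 : ℕ) - 1, hlt⟩) with hv
    have hrel : Rel G' K v w := Or.inl ⟨rfl, Or.inr (by simp [hv]; omega)⟩
    have hvne : v ≠ w := by
      intro he
      have := congrArg (fun p => ((Prod.snd p : Fin K) : ℕ)) he
      simp [hv] at this; omega
    exact h2 v hrel hvne (hasIn_iff.2 (by simp [hv]; omega))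
  · intro h1
    constructor
    · exact hasIn_iff.2 (by omega)
    · intro v hv hvne
      have := rel_lt hv hvne
      rw [hasIn_iff]
      omega

/-- out-neighbours of a level-`0` vertex -/
lemma rel_from_zero {v w : G' × Fin K} (h0 : (v.2 : ℕ) = 0) (h : Rel G' K v w)
    (hne : w ≠ v) :
    (w.1 = v.1 ∧ (w.2 : ℕ) = 1) ∨ (∃ s : G', w.1 = v.1 * s ∧ (w.2 : ℕ) = tcol G' s) := by
  rcases h with ⟨h1, h2 | h2⟩ | ⟨_, s, hs1, hs2⟩
  · exact absurd (Prod.ext h1.symm (Fin.ext (by omega))) hne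
  · exact Or.inl ⟨h1.symm, by omega⟩
  · exact Or.inr ⟨s, hs1, hs2⟩

/-- out-neighbours of a positive-level vertex: only the chain successor -/
lemma rel_from_pos {v w : G' × Fin K} (h0 : (v.2 : ℕ) ≠ 0) (h : Rel G' K v w)
    (hne : w ≠ v) : w.1 = v.1 ∧ (w.2 : ℕ) = (v.2 : ℕ) + 1 := by
  rcases h with ⟨h1, h2 | h2⟩ | ⟨hz, _⟩
  · exact absurd (Prod.ext h1.symm (Fin.ext (by omega))) hne
  · exact ⟨h1.symm, h2⟩
  · exact absurd hz h0

end Graph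

end EvoConstr

namespace EvoConstr

section Rigidity

variable {G' : Type} [Group G'] [Fintype G'] [DecidableEq G'] {K : ℕ}

/-- the induced map on `G'` of a permutation of the vertices -/
noncomputable def sigma (hK : Fintype.card G' + 2 ≤ K)
    (p : Equiv.Perm (G' × Fin K)) (g : G') : G' :=
  (p (g, ⟨0, by omega⟩)).1

variable (hK : Fintype.card G' + 2 ≤ K)
variable {p : Equiv.Perm (G' × Fin K)}
variable (hp : ∀ v w, Rel G' K (p v) (p w) ↔ Rel G' K v w)

include hp

lemma hp_symm : ∀ v w, Rel G' K (p.symm v) (p.symm w) ↔ Rel G' K v w := by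
  intro v w
  rw [← hp (p.symm v) (p.symm w)]
  simp

lemma hasIn_inv (w : G' × Fin K) : HasIn (p w) ↔ HasIn w := by
  constructor
  · rintro ⟨u, hu, hne⟩
    exact ⟨p.symm u, by
      have := (hp_symm hp u (p w)).2 hu
      simpa using this, by simpa using fun h => hne (by rw [← h]; simp)⟩
  · rintro ⟨u, hu, hne⟩
    exact ⟨p u, (hp u w).2 hu, fun h => hne (p.injective h)⟩

lemma level_zero_inv (w : G' × Fin K) : ((p w).2 : ℕ) = 0 ↔ (w.2 : ℕ) = 0 := by
  have := hasIn_inv hp w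
  rw [hasIn_iff, hasIn_iff] at this
  tauto

lemma levelOne_inv (w : G' × Fin K) : LevelOne (p w) ↔ LevelOne w := by
  unfold LevelOne
  constructor
  · rintro ⟨h1, h2⟩
    refine ⟨(hasIn_inv hp w).1 h1, fun v hv hne hin => ?_⟩
    exact h2 (p v) ((hp v w).2 hv) (fun h => hne (p.injective h)) ((hasIn_inv hp v).2 hin)
  · rintro ⟨h1, h2⟩
    refine ⟨(hasIn_inv hp w).2 h1, fun v hv hne hin => ?_⟩
    have hv' : Rel G' K (p.symm v) w := by
      have := (hp_symm hp v (p w)).2 hv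
      simpa using this
    have hne' : p.symm v ≠ w := by
      intro h; exact hne (by rw [← h]; simp)
    exact h2 (p.symm v) hv' hne' ((hasIn_inv hp (p.symm v)).1 (by simpa using hin))

include hK

lemma sigma_zero (g : G') : p (g, ⟨0, by omega⟩) = (sigma hK p g, ⟨0, by omega⟩) := by
  have h0 : ((p (g, ⟨0, by omega⟩)).2 : ℕ) = 0 :=
    (level_zero_inv hp _).2 rfl
  exact Prod.ext rfl (Fin.ext (by simpa using h0))

lemma p_level (g : G') : ∀ (j : ℕ) (hj : j < K),
    p (g, ⟨j, hj⟩) = (sigma hK p g, ⟨j, hj⟩) := by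
  intro j
  induction j with
  | zero => intro hj; exact sigma_zero hK hp g
  | succ j ih =>
    intro hj
    have hj' : j < K := by omega
    have hprev := ih hj'
    have hedge : Rel G' K (g, (⟨j, hj'⟩ : Fin K)) (g, ⟨j + 1, hj⟩) :=
      rel_chain rfl
    have hedge' : Rel G' K (sigma hK p g, (⟨j, hj'⟩ : Fin K)) (p (g, ⟨j + 1, hj⟩)) := by
      have := (hp _ _).2 hedge
      rwa [hprev] at this
    have hne : p (g, ⟨j + 1, hj⟩) ≠ (sigma hK p g, (⟨j, hj'⟩ : Fin K)) := by
      rw [← hprev]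
      intro h
      have h' := p.injective h
      have := congrArg (fun q => ((Prod.snd q : Fin K) : ℕ)) h'
      simp at this
    rcases Nat.eq_zero_or_pos j with rfl | hjpos
    · -- step from level 0: use LevelOne invariance to rule out cross edges
      have hl1 : LevelOne (p (g, ⟨0 + 1, hj⟩)) := by
        rw [levelOne_inv hp, levelOne_iff]
      have hl1' : ((p (g, ⟨0 + 1, hj⟩)).2 : ℕ) = 1 := levelOne_iff.1 hl1
      rcases rel_from_zero (by simp) hedge' hne with ⟨h1, h2⟩ | ⟨s, hs1, hs2⟩
      · exact Prod.ext h1 (Fin.ext (by simpa using h2))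
      · have := tcol_ge G' s
        omega
    · have hpos : (((sigma hK p g, (⟨j, hj'⟩ : Fin K)) : G' × Fin K).2 : ℕ) ≠ 0 := by
        simp; omega
      obtain ⟨h1, h2⟩ := rel_from_pos hpos hedge' hne
      exact Prod.ext h1 (Fin.ext (by simpa using h2))

lemma sigma_mul (g s : G') : sigma hK p (g * s) = sigma hK p g * s := by
  have h2K : tcol G' s < K := tcol_lt hK s
  have hedge : Rel G' K (g, (⟨0, by omega⟩ : Fin K)) (g * s, ⟨tcol G' s, h2K⟩) :=
    rel_cross s rfl rfl
  have hedge' := (hp _ _).2 hedge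
  rw [sigma_zero hK hp, p_level hK hp] at hedge'
  have hts := tcol_ge G' s
  rcases hedge' with ⟨h1, h2 | h2⟩ | ⟨_, s', hs1, hs2⟩
  · simp only [Fin.val_mk] at h2; omega
  · simp only [Fin.val_mk] at h2; omega
  · simp only at hs1 hs2
    have : s' = s := tcol_inj G' (by simpa using hs2.symm)
    subst this
    exact hs1

/-- Rigidity: any `Rel`-preserving permutation is a left translation. -/
theorem rigidity : ∀ v : G' × Fin K, p v = (sigma hK p 1 * v.1, v.2) := by
  intro v
  obtain ⟨g, i⟩ := v
  have h := p_level hK hp g i.val i.isLt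
  have hs : sigma hK p g = sigma hK p 1 * g := by
    have := sigma_mul hK hp 1 g
    simpa using this
  simp only [Fin.eta] at h
  rw [h, hs]

end Rigidity

end EvoConstr


open Finset

namespace EvoConstr

variable {k : Type u} [Field k]

variable (k) in
/-- The evolution-algebra multiplication on `V → k` with structure matrix `M`:
`(x*y) v = ∑ i, x i * y i * M v i`. -/
noncomputable def evMul {V : Type} [Fintype V] [DecidableEq V] (M : V → V → k) :
    (V → k) →ₗ[k] (V → k) →ₗ[k] (V → k) :=
  LinearMap.mk₂ k (fun x y => fun v => ∑ i, x i * y i * M v i)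
    (by intros m m' n; funext v; simp only [Pi.add_apply, add_mul, Finset.sum_add_distrib])
    (by intros c m n_; funext v
        simp only [Pi.smul_apply, smul_eq_mul, Finset.mul_sum]; congr 1; funext i; ring)
    (by intros m n n'; funext v; simp only [Pi.add_apply, mul_add, add_mul,
        Finset.sum_add_distrib])
    (by intros c m n_; funext v
        simp only [Pi.smul_apply, smul_eq_mul, Finset.mul_sum]; congr 1; funext i; ring)

variable {V : Type} [Fintype V] [DecidableEq V] (M : V → V → k)

lemma evMul_apply (x y : V → k) (v : V) : evMul k M x y v = ∑ i, x i * y i * M v i := rfl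

lemma evMul_comm (x y : V → k) : evMul k M x y = evMul k M y x := by
  funext v; simp only [evMul_apply]; congr 1; funext i; ring

lemma evMul_single (i j : V) (c d : k) :
    evMul k M (Pi.single i c) (Pi.single j d) =
      if i = j then fun v => c * d * M v i else 0 := by
  funext v
  by_cases h : i = j
  · subst h
    simp only [evMul_apply, if_pos rfl]
    rw [Finset.sum_eq_single i]
    · simp
    · intro b _ hb; simp [Pi.single_apply, hb]
    · simp
  · simp only [evMul_apply, if_neg h]
    rw [Finset.sum_eq_zero]
    · rfl
    · intro b _
      rcases eq_or_ne b i with rfl | hbi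
      · simp [Pi.single_apply, Ne.symm h]
      · simp [Pi.single_apply, hbi]

/-- products as linear combination of "squares" -/
lemma evMul_eq_sum_sq (x y : V → k) :
    evMul k M x y = ∑ i, (x i * y i) • (fun v => M v i) := by
  funext v
  simp [evMul_apply, Finset.sum_apply, mul_assoc]

end EvoConstr

namespace EvoConstr

section Algebra

open scoped Classical

variable {k : Type u} [Field k]
variable (k)
variable (G' : Type) [Group G'] [Fintype G'] [DecidableEq G'] (K : ℕ)

/-- structure matrix of the evolution algebra -/
noncomputable def Mx : (G' × Fin K) → (G' × Fin K) → k := fun w v =>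
  if Rel G' K v w then 1 else 0

/-- the square of the `j`-th natural basis vector -/
noncomputable def sq (j : G' × Fin K) : (G' × Fin K) → k := fun w => Mx k G' K w j

variable {G' K}

lemma mx_refl (v : G' × Fin K) : Mx k G' K v v = 1 := if_pos (rel_refl v)

lemma ite_one_zero_iff {P Q : Prop} [Decidable P] [Decidable Q]
    (h : (if P then (1 : k) else 0) = if Q then 1 else 0) : P ↔ Q := by
  constructor
  · intro hp
    by_contra hq
    rw [if_pos hp, if_neg hq] at h
    exact one_ne_zero h
  · intro hq
    by_contra hp
    rw [if_neg hp, if_pos hq] at h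
    exact zero_ne_one h

lemma sum_single_eq (f : (G' × Fin K) → k) : ∑ w, Pi.single w (f w) = f := by
  funext u
  rw [Finset.sum_apply]
  rw [Finset.sum_eq_single u]
  · rw [Pi.single_eq_same]
  · intro b _ hb
    exact Pi.single_eq_of_ne (Ne.symm hb) _
  · intro h; exact absurd (Finset.mem_univ u) h

lemma mul_single_single (i j : G' × Fin K) :
    evMul k (Mx k G' K) (Pi.single i (1 : k)) (Pi.single j 1) =
      if i = j then sq k G' K i else 0 := by
  rw [evMul_single]
  by_cases h : i = j
  · rw [if_pos h, if_pos h]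
    funext v
    simp [sq]
  · rw [if_neg h, if_neg h]

lemma evMul_eq_sum_sq' (x y : (G' × Fin K) → k) :
    evMul k (Mx k G' K) x y = ∑ i, (x i * y i) • sq k G' K i :=
  evMul_eq_sum_sq _ _ _

lemma sq_filter_sum (v : G' × Fin K) :
    sq k G' K v = ∑ w ∈ Finset.univ.filter (fun w => Rel G' K v w), Pi.single w (1 : k) := by
  funext u
  rw [Finset.sum_apply]
  by_cases h : Rel G' K v u
  · rw [Finset.sum_eq_single u]
    · rw [Pi.single_eq_same]
      simp [sq, Mx, h]
    · intro b _ hb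
      exact Pi.single_eq_of_ne (Ne.symm hb) _
    · intro hu
      exact absurd (Finset.mem_filter.2 ⟨Finset.mem_univ _, h⟩) hu
  · rw [Finset.sum_eq_zero]
    · simp [sq, Mx, h]
    · intro b hb
      refine Pi.single_eq_of_ne (fun he => ?_) _
      exact h (by rw [← he] at hb; exact (Finset.mem_filter.1 hb).2)

variable (hK : Fintype.card G' + 2 ≤ K)
include hK

lemma single_mem_span :
    ∀ (d : ℕ) (v : G' × Fin K), K ≤ (v.2 : ℕ) + d →
      Pi.single v (1 : k) ∈ Submodule.span k (Set.range (sq k G' K)) := by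
  intro d
  induction d with
  | zero =>
    intro v hv
    exact absurd hv (by omega)
  | succ d ih =>
    intro v hv
    have hv_mem : v ∈ Finset.univ.filter (fun w => Rel G' K v w) :=
      Finset.mem_filter.2 ⟨Finset.mem_univ _, rel_refl v⟩
    have hsum := Finset.add_sum_erase _ (fun w => Pi.single w (1 : k)) hv_mem
    have hrw : Pi.single v (1 : k) = sq k G' K v -
        ∑ w ∈ (Finset.univ.filter (fun w => Rel G' K v w)).erase v, Pi.single w (1 : k) := by
      rw [sq_filter_sum]
      exact eq_sub_of_add_eq hsum
    rw [hrw]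
    refine Submodule.sub_mem _ (Submodule.subset_span ⟨v, rfl⟩) (Submodule.sum_mem _ ?_)
    intro w hw
    obtain ⟨hw1, hw2⟩ := Finset.mem_erase.1 hw
    have hlt := rel_lt (Finset.mem_filter.1 hw2).2 (Ne.symm hw1)
    exact ih w (by omega)

lemma span_sq : Submodule.span k (Set.range (sq k G' K)) = ⊤ := by
  refine eq_top_iff.2 ?_
  rw [← (Pi.basisFun k (G' × Fin K)).span_eq]
  refine Submodule.span_le.2 ?_
  rintro _ ⟨i, rfl⟩
  rw [Pi.basisFun_apply]
  exact single_mem_span k hK K i (by omega)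

lemma indep_sq : LinearIndependent k (sq k G' K) :=
  linearIndependent_of_top_le_span_of_card_eq_finrank
    (span_sq k hK).ge (Module.finrank_pi k).symm

/-- every multiplication-preserving linear automorphism sends natural basis vectors to
natural basis vectors, permuted by a left translation -/
theorem aut_char (f : ((G' × Fin K) → k) ≃ₗ[k] ((G' × Fin K) → k))
    (hf : ∀ x y, f (evMul k (Mx k G' K) x y) = evMul k (Mx k G' K) (f x) (f y)) :
    ∃ a : G', ∀ v : G' × Fin K,
      f (Pi.single v 1) = Pi.single ((a * v.1, v.2) : G' × Fin K) (1 : k) := by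
  set xv : (G' × Fin K) → ((G' × Fin K) → k) := fun v => f (Pi.single v 1) with hxv
  -- coordinatewise products of images of distinct basis vectors vanish
  have hzero : ∀ u v, u ≠ v → ∀ i, xv u i * xv v i = 0 := by
    intro u v huv
    have h0 : evMul k (Mx k G' K) (Pi.single u (1 : k)) (Pi.single v 1) = 0 := by
      rw [mul_single_single, if_neg huv]
    have h1 : evMul k (Mx k G' K) (xv u) (xv v) = 0 := by
      rw [hxv]
      simp only
      rw [← hf, h0, map_zero]
    rw [evMul_eq_sum_sq'] at h1
    exact Fintype.linearIndependent_iff.1 (indep_sq k hK) _ h1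
  -- supports
  set supp : (G' × Fin K) → Finset (G' × Fin K) :=
    fun v => Finset.univ.filter (fun w => xv v w ≠ 0) with hsupp
  have hne : ∀ v, (supp v).Nonempty := by
    intro v
    have h0 : xv v ≠ 0 := by
      rw [hxv]
      simp only
      rw [Ne, LinearEquiv.map_eq_zero_iff]
      intro h
      have := congrFun h v
      rw [Pi.single_eq_same] at this
      exact one_ne_zero this
    obtain ⟨w, hw⟩ := Function.ne_iff.1 h0
    exact ⟨w, Finset.mem_filter.2 ⟨Finset.mem_univ _, hw⟩⟩
  have hdisj : ∀ u v : G' × Fin K, u ≠ v → Disjoint (supp u) (supp v) := by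
    intro u v huv
    rw [Finset.disjoint_left]
    intro w hw hw'
    have h1 := (Finset.mem_filter.1 hw).2
    have h2 := (Finset.mem_filter.1 hw').2
    exact h1 ((mul_eq_zero.1 (hzero u v huv w)).resolve_right h2)
  have hcard : ∀ v, (supp v).card = 1 := by
    by_contra hc
    push_neg at hc
    obtain ⟨v0, hv0⟩ := hc
    have h1 : ∀ v : G' × Fin K, 1 ≤ (supp v).card := fun v => Finset.card_pos.2 (hne v)
    have hlt : ∑ _v : G' × Fin K, 1 < ∑ v, (supp v).card :=
      Finset.sum_lt_sum (fun i _ => h1 i)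
        ⟨v0, Finset.mem_univ _, lt_of_le_of_ne (h1 v0) (Ne.symm hv0)⟩
    have hle : ∑ v, (supp v).card ≤ Fintype.card (G' × Fin K) := by
      rw [← Finset.card_biUnion (fun u _ v _ huv => hdisj u v huv)]
      exact (Finset.card_le_univ _).trans_eq (Finset.card_univ)
    simp only [Finset.sum_const, smul_eq_mul, mul_one, Finset.card_univ] at hlt
    omega
  have hq1 : ∀ v, ∃ w, supp v = {w} := fun v => Finset.card_eq_one.1 (hcard v)
  choose q hq using hq1
  have hmem : ∀ v w, xv v w ≠ 0 ↔ w = q v := by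
    intro v w
    constructor
    · intro h
      have hw : w ∈ supp v := Finset.mem_filter.2 ⟨Finset.mem_univ _, h⟩
      rw [hq v] at hw
      exact Finset.mem_singleton.1 hw
    · rintro rfl
      have hw : q v ∈ supp v := by rw [hq v]; exact Finset.mem_singleton_self _
      exact (Finset.mem_filter.1 hw).2
  have hlamne : ∀ v, xv v (q v) ≠ 0 := fun v => (hmem v (q v)).2 rfl
  have hxv_single : ∀ v, xv v = Pi.single (q v) (xv v (q v)) := by
    intro v; funext w
    rcases eq_or_ne w (q v) with rfl | hw
    · rw [Pi.single_eq_same]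
    · rw [Pi.single_eq_of_ne hw]
      by_contra h
      exact hw ((hmem v w).1 h)
  have hqinj : Function.Injective q := by
    intro u v h
    by_contra huv
    have h0 := hzero u v huv (q v)
    have hu : xv u (q v) ≠ 0 := by rw [← h]; exact hlamne u
    exact (mul_ne_zero hu (hlamne v)) h0
  -- key numerical identity
  have key : ∀ v w, Mx k G' K w v * xv w (q w) =
      xv v (q v) * xv v (q v) * Mx k G' K (q w) (q v) := by
    intro v w
    have h1 : f (sq k G' K v) = evMul k (Mx k G' K) (xv v) (xv v) := by
      have h0 : evMul k (Mx k G' K) (Pi.single v (1 : k)) (Pi.single v 1) = sq k G' K v := by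
        rw [mul_single_single, if_pos rfl]
      rw [← h0, hf]
    have h2 : f (sq k G' K v) = ∑ u, (Mx k G' K u v) • (xv u) := by
      have hd : sq k G' K v = ∑ u, Pi.single u (Mx k G' K u v) := (sum_single_eq k _).symm
      rw [hd, map_sum]
      congr 1; funext u
      have hs : Pi.single u (Mx k G' K u v) = (Mx k G' K u v) • (Pi.single u (1 : k) : (G' × Fin K) → k) := by
        funext w
        rcases eq_or_ne w u with rfl | hw
        · rw [Pi.single_eq_same, Pi.smul_apply, Pi.single_eq_same, smul_eq_mul, mul_one]
        · rw [Pi.single_eq_of_ne hw, Pi.smul_apply, Pi.single_eq_of_ne hw, smul_zero]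
      rw [hs, map_smul]
    have h3 : evMul k (Mx k G' K) (xv v) (xv v) =
        (xv v (q v) * xv v (q v)) • sq k G' K (q v) := by
      rw [evMul_eq_sum_sq']
      rw [Finset.sum_eq_single (q v)]
      · intro b _ hb
        rw [hxv_single v, Pi.single_eq_of_ne hb]
        simp
      · intro h; exact absurd (Finset.mem_univ _) h
    have h4 : (∑ u, (Mx k G' K u v) • (xv u)) =
        (xv v (q v) * xv v (q v)) • sq k G' K (q v) := by
      rw [← h2, h1, h3]
    have h5 := congrFun h4 (q w)
    rw [Finset.sum_apply] at h5
    rw [Finset.sum_eq_single w] at h5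
    · rw [Pi.smul_apply, smul_eq_mul] at h5
      rw [h5, Pi.smul_apply, smul_eq_mul]
      rfl
    · intro b _ hb
      rw [Pi.smul_apply, hxv_single b, Pi.single_eq_of_ne (fun hh => hb (hqinj hh).symm), smul_zero]
    · intro h; exact absurd (Finset.mem_univ _) h
  -- scalars are 1
  have hlam1 : ∀ v, xv v (q v) = 1 := by
    intro v
    have h := key v v
    rw [mx_refl, mx_refl, one_mul, mul_one] at h
    exact (mul_left_cancel₀ (hlamne v) (by rw [← h, mul_one])).symm
  -- the permutation preserves the relation
  have hrel : ∀ v w, Rel G' K v w ↔ Rel G' K (q v) (q w) := by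
    intro v w
    have h := key v w
    rw [hlam1 v, hlam1 w, mul_one, one_mul, one_mul] at h
    exact ite_one_zero_iff k h
  have hbij : Function.Bijective q := Finite.injective_iff_bijective.1 hqinj
  refine ⟨sigma hK (Equiv.ofBijective q hbij) 1, ?_⟩
  intro v
  have hrel' : ∀ v w, Rel G' K ((Equiv.ofBijective q hbij) v) ((Equiv.ofBijective q hbij) w)
      ↔ Rel G' K v w := fun v w => (hrel v w).symm
  have hrig := rigidity hK hrel' v
  calc f (Pi.single v 1) = xv v := rfl
    _ = Pi.single (q v) (xv v (q v)) := hxv_single v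
    _ = Pi.single (q v) 1 := by rw [hlam1]
    _ = _ := by rw [show q v = ((Equiv.ofBijective q hbij) v) from rfl, hrig]

end Algebra

end EvoConstr

namespace EvoConstr

section Pack

open scoped Classical

variable {k : Type u} [Field k]
variable (k)
variable (G' : Type) [Group G'] [Fintype G'] [DecidableEq G'] (K : ℕ)

/-- The evolution algebra attached to `(G', K)`. -/
noncomputable def EA : EvolutionAlgebra k where
  carrier := (G' × Fin K) → k
  mul := evMul k (Mx k G' K)
  mul_comm := evMul_comm (Mx k G' K)
  natural := by
    refine ⟨ULift (G' × Fin K), inferInstance,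
      (Pi.basisFun k (G' × Fin K)).reindex Equiv.ulift.symm, ?_⟩
    intro i j hij
    simp only [Module.Basis.reindex_apply, Equiv.symm_symm, Pi.basisFun_apply]
    rw [mul_single_single, if_neg]
    intro h
    exact hij (Equiv.ulift.injective h)

lemma EA_regular (hK : Fintype.card G' + 2 ≤ K) : (EA k G' K).IsRegular := by
  show Submodule.span k
    {z : (G' × Fin K) → k | ∃ x y, z = evMul k (Mx k G' K) x y} = ⊤
  refine eq_top_iff.2 ?_
  have h1 : Set.range (sq k G' K) ⊆
      {z : (G' × Fin K) → k | ∃ x y, z = evMul k (Mx k G' K) x y} := by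
    rintro _ ⟨i, rfl⟩
    exact ⟨Pi.single i 1, Pi.single i 1, by rw [mul_single_single, if_pos rfl]⟩
  calc (⊤ : Submodule k ((G' × Fin K) → k))
      = Submodule.span k (Set.range (sq k G' K)) := (span_sq k hK).symm
    _ ≤ _ := Submodule.span_mono h1

/-- left translation on vertices -/
noncomputable def tau (a : G') : Equiv.Perm (G' × Fin K) :=
  (Equiv.mulLeft a).prodCongr (Equiv.refl _)

lemma tau_apply (a : G') (v : G' × Fin K) : tau G' K a v = (a * v.1, v.2) := rfl

lemma rel_tau (a : G') (v w : G' × Fin K) :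
    Rel G' K (tau G' K a v) (tau G' K a w) ↔ Rel G' K v w := by
  obtain ⟨g, i⟩ := v; obtain ⟨h, j⟩ := w
  show Rel G' K (a * g, i) (a * h, j) ↔ _
  unfold Rel
  constructor
  · rintro (⟨h1, h2⟩ | ⟨h1, s, hs1, hs2⟩)
    · exact Or.inl ⟨mul_left_cancel h1, h2⟩
    · refine Or.inr ⟨h1, s, ?_, hs2⟩
      rw [mul_assoc] at hs1
      exact mul_left_cancel hs1
  · rintro (⟨h1, h2⟩ | ⟨h1, s, hs1, hs2⟩)
    · exact Or.inl ⟨by simp only at h1; rw [h1], h2⟩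
    · refine Or.inr ⟨h1, s, ?_, hs2⟩
      simp only at hs1
      rw [hs1, mul_assoc]

/-- left translation as a linear automorphism -/
noncomputable def Fa (a : G') : ((G' × Fin K) → k) ≃ₗ[k] ((G' × Fin K) → k) :=
  LinearEquiv.funCongrLeft k k (tau G' K a).symm

lemma Fa_apply (a : G') (x : (G' × Fin K) → k) (v : G' × Fin K) :
    Fa k G' K a x v = x ((tau G' K a).symm v) := rfl

lemma Fa_single (a : G') (v : G' × Fin K) (c : k) :
    Fa k G' K a (Pi.single v c) = Pi.single (tau G' K a v) c := by
  funext w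
  rw [Fa_apply]
  rcases eq_or_ne w (tau G' K a v) with rfl | hw
  · rw [Equiv.symm_apply_apply, Pi.single_eq_same, Pi.single_eq_same]
  · rw [Pi.single_eq_of_ne hw, Pi.single_eq_of_ne (fun hh => hw ((Equiv.symm_apply_eq _).1 hh))]

lemma Fa_mem (a : G') : ∀ x y, Fa k G' K a (evMul k (Mx k G' K) x y) =
    evMul k (Mx k G' K) (Fa k G' K a x) (Fa k G' K a y) := by
  intro x y
  funext v
  rw [Fa_apply, evMul_apply, evMul_apply]
  have hM : ∀ i, Mx k G' K ((tau G' K a).symm v) i = Mx k G' K v (tau G' K a i) := by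
    intro i
    unfold Mx
    have hiff : Rel G' K i ((tau G' K a).symm v) ↔ Rel G' K (tau G' K a i) v := by
      rw [← rel_tau G' K a i ((tau G' K a).symm v), Equiv.apply_symm_apply]
    rw [if_congr hiff rfl rfl]
  calc ∑ i, x i * y i * Mx k G' K ((tau G' K a).symm v) i
      = ∑ i, x i * y i * Mx k G' K v (tau G' K a i) := by
        refine Finset.sum_congr rfl fun i _ => ?_
        rw [hM]
    _ = ∑ i, x ((tau G' K a).symm i) * y ((tau G' K a).symm i) * Mx k G' K v i := by
        refine Fintype.sum_equiv (tau G' K a) _ _ fun i => ?_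
        rw [Equiv.symm_apply_apply]
    _ = ∑ i, Fa k G' K a x i * Fa k G' K a y i * Mx k G' K v i := rfl

lemma Fa_mul (a b : G') : Fa k G' K (a * b) = Fa k G' K a * Fa k G' K b := by
  apply LinearEquiv.toLinearMap_injective
  apply Module.Basis.ext (Pi.basisFun k (G' × Fin K))
  intro i
  show Fa k G' K (a * b) (Pi.basisFun k (G' × Fin K) i) =
    Fa k G' K a (Fa k G' K b (Pi.basisFun k (G' × Fin K) i))
  rw [Pi.basisFun_apply, Fa_single, Fa_single, Fa_single]
  have ht : tau G' K (a * b) i = tau G' K a (tau G' K b i) := by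
    show ((a * b) * i.1, i.2) = (a * (b * i.1), i.2)
    rw [mul_assoc]
  rw [ht]

/-- the translations as a homomorphism into the automorphism group -/
noncomputable def Phi : G' →* (EA k G' K).Aut :=
  MonoidHom.mk' (fun a => ⟨Fa k G' K a, Fa_mem k G' K a⟩)
    (fun a b => Subtype.ext (Fa_mul k G' K a b))

lemma single_eq_single {u w : G' × Fin K}
    (h : (Pi.single u (1 : k) : (G' × Fin K) → k) = Pi.single w 1) :
    u = w := by
  by_contra hne
  have h1 := congrFun h u
  rw [Pi.single_eq_same, Pi.single_eq_of_ne hne] at h1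
  exact one_ne_zero h1

lemma Phi_bij (hK : Fintype.card G' + 2 ≤ K) : Function.Bijective (Phi k G' K) := by
  constructor
  · intro a b hab
    have h := Subtype.ext_iff.1 hab
    have h2 : Fa k G' K a (Pi.single ((1 : G'), (⟨0, by omega⟩ : Fin K)) (1 : k)) =
        Fa k G' K b (Pi.single ((1 : G'), (⟨0, by omega⟩ : Fin K)) (1 : k)) := by
      rw [show Fa k G' K a = Fa k G' K b from h]
    rw [Fa_single, Fa_single] at h2
    have h3 := single_eq_single k G' K h2
    have h4 := congrArg Prod.fst h3
    simpa [tau_apply] using h4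
  · intro f
    obtain ⟨a, ha⟩ := aut_char k hK f.1 f.2
    refine ⟨a, ?_⟩
    apply Subtype.ext
    apply LinearEquiv.toLinearMap_injective
    apply Module.Basis.ext (Pi.basisFun k (G' × Fin K))
    intro i
    show Fa k G' K a (Pi.basisFun k (G' × Fin K) i) = f.1 (Pi.basisFun k (G' × Fin K) i)
    rw [Pi.basisFun_apply, Fa_single]
    exact ((ha i).trans rfl).symm

/-- the automorphism group of `EA G' K` is `G'` -/
noncomputable def autEquiv (hK : Fintype.card G' + 2 ≤ K) : (EA k G' K).Aut ≃* G' :=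
  (MulEquiv.ofBijective (Phi k G' K) (Phi_bij k G' K hK)).symm

end Pack

end EvoConstr


/-- **Regular evolution algebras are universally finite.** For every field `k` and every
finite group `G` there are infinitely many pairwise non-isomorphic (finite-dimensional)
regular evolution algebras over `k` whose automorphism group is isomorphic to `G`. -/
theorem regular_evolution_algebras_universally_finite (k : Type u) [Field k]
    (G : Type v) [Group G] [Finite G] :
    ∃ A : ℕ → EvolutionAlgebra k,
      (∀ n, (A n).IsRegular) ∧
      (∀ m n, m ≠ n → ¬ (A m).Iso (A n)) ∧
      (∀ n, Nonempty ((A n).Aut ≃* G)) := by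
  obtain ⟨G', gG', fG', ⟨eG⟩⟩ := Finite.exists_type_univ_nonempty_mulEquiv.{v, 0} G
  letI := gG'
  letI := fG'
  letI : DecidableEq G' := Classical.decEq G'
  refine ⟨fun n => EvoConstr.EA k G' (Fintype.card G' + 2 + n),
    fun n => EvoConstr.EA_regular k G' _ (by omega), ?_, ?_⟩
  · intro m n hmn hiso
    obtain ⟨e, -⟩ := hiso
    have h2 : Module.finrank k ((G' × Fin (Fintype.card G' + 2 + m)) → k) =
        Module.finrank k ((G' × Fin (Fintype.card G' + 2 + n)) → k) := e.finrank_eq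
    rw [Module.finrank_pi, Module.finrank_pi, Fintype.card_prod, Fintype.card_prod,
      Fintype.card_fin, Fintype.card_fin] at h2
    have hm : 0 < Fintype.card G' := Fintype.card_pos
    have := Nat.eq_of_mul_eq_mul_left hm h2
    omega
  · intro n
    exact ⟨(EvoConstr.autEquiv k G' (Fintype.card G' + 2 + n) (by omega)).trans eG.symm⟩
end

section
/- Let k be a field and G an abstract group. Then G is finite if and only if there exists a finite-dimensional regular evolution algebra X over k whose group of algebra automorphisms is isomorphic to G. -/
universe u v w

open Submodule Finset

section General
variable {k : Type u} [Field k] {X : Type w} [AddCommGroup X] [Module k X]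
  {ι : Type*} [Fintype ι] (b : Module.Basis ι k X) (mul : X →ₗ[k] X →ₗ[k] X)

theorem mul_expand (hd : ∀ i j, i ≠ j → mul (b i) (b j) = 0) (x y : X) :
    mul x y = ∑ i, (b.repr x i * b.repr y i) • mul (b i) (b i) := by
  conv_lhs => rw [← b.sum_repr x, ← b.sum_repr y]
  simp only [map_sum, LinearMap.sum_apply, map_smul, LinearMap.smul_apply, Finset.smul_sum]
  rw [Finset.sum_comm]
  refine Finset.sum_congr rfl fun i _ => ?_
  rw [Finset.sum_eq_single i]
  · rw [smul_smul, mul_comm]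
  · intro j _ hj
    rw [hd i j (Ne.symm hj), smul_zero, smul_zero]
  · intro h; exact absurd (Finset.mem_univ _) h

theorem span_range_omega (hd : ∀ i j, i ≠ j → mul (b i) (b j) = 0)
    (hspan : span k {z : X | ∃ x y, z = mul x y} = ⊤) :
    span k (Set.range fun i => mul (b i) (b i)) = ⊤ := by
  rw [← top_le_iff, ← hspan, Submodule.span_le]
  rintro z ⟨x, y, rfl⟩
  rw [mul_expand b mul hd x y]
  exact Submodule.sum_mem _ fun i _ => Submodule.smul_mem _ _ (Submodule.subset_span ⟨i, rfl⟩)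

theorem exists_repr_ne_zero (v : ι → X) (hs : ⊤ ≤ span k (Set.range v)) (j : ι) :
    ∃ i, b.repr (v i) j ≠ 0 := by
  by_contra h
  push_neg at h
  have hker : span k (Set.range v) ≤ LinearMap.ker (b.coord j) := by
    rw [Submodule.span_le]
    rintro _ ⟨i, rfl⟩
    simpa [Module.Basis.coord_apply] using h i
  have hbj : b j ∈ LinearMap.ker (b.coord j) := hker (hs trivial)
  rw [LinearMap.mem_ker, Module.Basis.coord_apply, Module.Basis.repr_self] at hbj
  simp at hbj

theorem monomial_of_aut [FiniteDimensional k X]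
    (hd : ∀ i j, i ≠ j → mul (b i) (b j) = 0)
    (hspan : span k {z : X | ∃ x y, z = mul x y} = ⊤)
    (e : X ≃ₗ[k] X) (he : ∀ x y, e (mul x y) = mul (e x) (e y)) :
    ∃ (σ : Equiv.Perm ι) (lam : ι → k), (∀ i, lam i ≠ 0) ∧ ∀ i, e (b i) = lam i • b (σ i) := by
  classical
  have hω := span_range_omega b mul hd hspan
  set Bω : Module.Basis ι k X := basisOfTopLeSpanOfCardEqFinrank (fun i => mul (b i) (b i)) hω.ge
    (Module.finrank_eq_card_basis b).symm with hBω
  have hBωc : ⇑Bω = fun i => mul (b i) (b i) := coe_basisOfTopLeSpanOfCardEqFinrank _ _ _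
  set C : ι → ι → k := fun i j => b.repr (e (b i)) j with hC
  have hcol : ∀ i i' j, i ≠ i' → C i j * C i' j = 0 := by
    intro i i' j hne
    have h0 : (0:X) = ∑ j, (C i j * C i' j) • mul (b j) (b j) := by
      rw [← mul_expand b mul hd, ← he, hd i i' hne, map_zero]
    have hli := Fintype.linearIndependent_iff.mp Bω.linearIndependent
      (fun j => C i j * C i' j)
    rw [hBωc] at hli
    exact hli h0.symm j
  have huniq : ∀ i i' j, C i j ≠ 0 → C i' j ≠ 0 → i = i' := by
    intro i i' j h1 h2
    by_contra hne
    rcases mul_eq_zero.mp (hcol i i' j hne) with h | h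
    · exact h1 h
    · exact h2 h
  have hcolex : ∀ j, ∃ i, C i j ≠ 0 := by
    intro j
    apply exists_repr_ne_zero b (fun i => e (b i))
    have hmap : Submodule.map (e : X →ₗ[k] X) (span k (Set.range b)) =
        span k (Set.range fun i => e (b i)) := by
      rw [Submodule.map_span, ← Set.range_comp]
      rfl
    rw [← hmap, b.span_eq, Submodule.map_top, LinearEquiv.range]
  choose f hf using hcolex
  have hrow : ∀ i, ∃ j, C i j ≠ 0 := by
    intro i
    by_contra h
    push_neg at h
    have hz : b.repr (e (b i)) = 0 := Finsupp.ext fun j => h j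
    have : e (b i) = 0 := by
      rwa [LinearEquiv.map_eq_zero_iff] at hz
    exact b.ne_zero i (e.map_eq_zero_iff.mp this)
  have hfsurj : Function.Surjective f := fun i => by
    obtain ⟨j, hj⟩ := hrow i
    exact ⟨j, huniq _ _ _ (hf j) hj⟩
  have hfbij : Function.Bijective f := Finite.surjective_iff_bijective.mp hfsurj
  let τ := Equiv.ofBijective f hfbij
  have hCj : ∀ i j, C i j ≠ 0 → j = τ.symm i := by
    intro i j hj
    have : f j = i := huniq _ _ _ (hf j) hj
    have : τ j = i := this
    rw [← this, Equiv.symm_apply_apply]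
  refine ⟨τ.symm, fun i => C i (τ.symm i), fun i => ?_, fun i => ?_⟩
  · have h1 : f (τ.symm i) = i := τ.apply_symm_apply i
    have := hf (τ.symm i)
    rwa [h1] at this
  · conv_lhs => rw [← b.sum_repr (e (b i))]
    rw [Finset.sum_eq_single (τ.symm i)]
    · intro j _ hj
      have : C i j = 0 := by
        by_contra hC0
        exact hj (hCj i j hC0)
      rw [show (b.repr (e (b i))) j = C i j from rfl, this, zero_smul]
    · intro h; exact absurd (Finset.mem_univ _) h

theorem aut_rel (e : X ≃ₗ[k] X) (he : ∀ x y, e (mul x y) = mul (e x) (e y))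
    (σ : Equiv.Perm ι) (lam : ι → k)
    (hl : ∀ i, e (b i) = lam i • b (σ i)) (i j : ι) :
    b.repr (mul (b i) (b i)) j * lam j
      = lam i ^ 2 * b.repr (mul (b (σ i)) (b (σ i))) (σ j) := by
  classical
  have h1 : e (mul (b i) (b i)) = (lam i ^ 2) • mul (b (σ i)) (b (σ i)) := by
    rw [he, hl]
    simp only [map_smul, LinearMap.smul_apply, smul_smul]
    rw [sq]
  have h2 : e (mul (b i) (b i)) = ∑ l, (b.repr (mul (b i) (b i)) l * lam l) • b (σ l) := by
    conv_lhs => rw [← b.sum_repr (mul (b i) (b i))]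
    rw [map_sum]
    refine Finset.sum_congr rfl fun l _ => ?_
    rw [map_smul, hl, smul_smul]
  have h3 := congrArg (fun z => b.repr z (σ j)) (h2.symm.trans h1)
  simp only [map_sum, map_smul, Finsupp.coe_finset_sum, Finset.sum_apply, Finsupp.smul_apply,
    Module.Basis.repr_self, smul_eq_mul] at h3
  rw [Finset.sum_eq_single j] at h3
  · rw [Finsupp.single_apply, if_pos rfl, mul_one] at h3
    exact h3
  · intro l _ hl'
    rw [Finsupp.single_apply, if_neg (fun h => hl' (σ.injective h)), mul_zero]
  · intro h; exact absurd (Finset.mem_univ _) h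

end General

def Dit {ι : Type*} {k : Type*} [Field k] (dd : ι → k) (f : ι → ι) : ℕ → ι → k
  | 0 => fun _ => 1
  | (m+1) => fun j => dd j * (Dit dd f m (f j))^2

section Fin1
open Polynomial
variable {k : Type u} [Field k] {X : Type w} [AddCommGroup X] [Module k X]
  {ι : Type*} [Fintype ι] (b : Module.Basis ι k X) (mul : X →ₗ[k] X →ₗ[k] X)

theorem setOf_aut_finite [FiniteDimensional k X]
    (hd : ∀ i j, i ≠ j → mul (b i) (b j) = 0)
    (hspan : span k {z : X | ∃ x y, z = mul x y} = ⊤) :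
    {e : X ≃ₗ[k] X | ∀ x y, e (mul x y) = mul (e x) (e y)}.Finite := by
  classical
  set a : ι → ι → k := fun i j => b.repr (mul (b i) (b i)) j with ha
  have hcol : ∀ j, ∃ i, a i j ≠ 0 := fun j =>
    exists_repr_ne_zero b (fun i => mul (b i) (b i))
      (span_range_omega b mul hd hspan).ge j
  choose f hfne using hcol
  have hcyc : ∀ j : ι, ∃ s t : ℕ, s < t ∧ f^[s] j = f^[t] j := by
    intro j
    obtain ⟨m, m', hne, heq⟩ := Finite.exists_ne_map_eq_of_infinite (fun m : ℕ => f^[m] j)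
    rcases hne.lt_or_gt with h | h
    · exact ⟨m, m', h, heq⟩
    · exact ⟨m', m, h, heq.symm⟩
  choose s t hst hcycle using hcyc
  set dd : (ι → ι) → ι → k := fun σ j => a (σ (f j)) (σ j) / a (f j) j with hdd
  set D : (ι → ι) → ℕ → ι → k := fun σ => Dit (dd σ) f with hD
  set P : (ι → ι) → ι → k[X] := fun σ j =>
    C (D σ (t j - s j) (f^[s j] j)) * Polynomial.X ^ (2 ^ (t j - s j)) - Polynomial.X with hP
  have hPne : ∀ σ j, P σ j ≠ 0 := by
    intro σ j
    intro h0
    have h1 : (P σ j).coeff 1 = 0 := by rw [h0]; simp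
    rw [hP] at h1
    simp only [coeff_sub, coeff_C_mul, coeff_X_pow, coeff_X_one] at h1
    have h2 : (1:ℕ) ≠ 2 ^ (t j - s j) := by
      have : t j - s j ≠ 0 := Nat.sub_ne_zero_of_lt (hst j)
      exact (Nat.one_lt_two_pow_iff.mpr this).ne
    rw [if_neg h2, mul_zero, zero_sub] at h1
    exact one_ne_zero (neg_eq_zero.mp h1)
  set Fin2 : (ι → ι) → ι → Set k := fun σ j =>
    (fun x => D σ (s j) j * x ^ (2 ^ (s j))) '' {x | (P σ j).IsRoot x} with hFin2
  set Sbig : Set (ι → X) := ⋃ σ : ι → ι, Set.pi Set.univ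
    (fun j => (fun c => c • b (σ j)) '' Fin2 σ j) with hSbig
  have hfin : Sbig.Finite := by
    refine Set.finite_iUnion fun σ => Set.Finite.pi fun j => ?_
    exact ((Polynomial.finite_setOf_isRoot (hPne σ j)).image _).image _
  have himage : (fun (e : X ≃ₗ[k] X) (j : ι) => e (b j)) ''
      {e : X ≃ₗ[k] X | ∀ x y, e (mul x y) = mul (e x) (e y)} ⊆ Sbig := by
    rintro _ ⟨e, he, rfl⟩
    obtain ⟨σ, lam, hlam0, hl⟩ := monomial_of_aut b mul hd hspan e he
    have hrel : ∀ j, lam j = dd ⇑σ j * lam (f j) ^ 2 := by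
      intro j
      have h5 := aut_rel b mul e he σ lam hl (f j) j
      rw [hdd]
      rw [div_mul_eq_mul_div, eq_div_iff (hfne j)]
      linear_combination h5
    have hiter : ∀ m jj, lam jj = D ⇑σ m jj * (lam (f^[m] jj)) ^ (2 ^ m) := by
      intro m
      induction m with
      | zero => intro jj; simp [hD, Dit]
      | succ m ih =>
        intro jj
        rw [Function.iterate_succ_apply]
        rw [hrel jj, ih (f jj)]
        show _ = Dit (dd ⇑σ) f (m+1) jj * _
        rw [Dit]
        show dd ⇑σ jj * (Dit (dd ⇑σ) f m (f jj) * lam (f^[m] (f jj)) ^ 2 ^ m) ^ 2 = _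
        rw [mul_pow, ← pow_mul, ← pow_succ]
        ring
    refine Set.mem_iUnion.mpr ⟨⇑σ, fun j _ => ?_⟩
    refine ⟨lam j, ⟨lam (f^[s j] j), ?_, (hiter (s j) j).symm⟩, by simpa using (hl j).symm⟩
    have h6 := hiter (t j - s j) (f^[s j] j)
    have h7 : f^[t j - s j] (f^[s j] j) = f^[s j] j := by
      rw [← Function.iterate_add_apply, Nat.sub_add_cancel (le_of_lt (hst j)), ← hcycle j]
    rw [h7] at h6
    show (P ⇑σ j).eval (lam (f^[s j] j)) = 0
    rw [hP]
    simp only [eval_sub, eval_mul, eval_C, eval_pow, eval_X]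
    rw [sub_eq_zero]
    exact h6.symm
  refine Set.Finite.of_finite_image (hfin.subset himage) ?_
  intro e1 _ e2 _ hF
  apply LinearEquiv.toLinearMap_injective
  apply b.ext
  intro i
  exact congrFun hF i
end Fin1

namespace EvoCons

variable (k : Type u) [Field k] (H : Type u) [Group H] [Fintype H] [DecidableEq H]

abbrev VT := H ⊕ H × H × Fin (Fintype.card H + 2)

variable {H}

noncomputable def posn (s : H) : ℕ := (Fintype.equivFin H s : ℕ) + 1

lemma posn_pos (s : H) : 1 ≤ posn s := Nat.le_add_left 1 _

lemma posn_lt (s : H) : posn s < Fintype.card H + 2 := by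
  have := (Fintype.equivFin H s).isLt
  simp only [posn]; omega

lemma posn_inj {s s' : H} (h : posn s = posn s') : s = s' := by
  simp only [posn] at h
  have : Fintype.equivFin H s = Fintype.equivFin H s' := Fin.ext (by omega)
  exact (Fintype.equivFin H).injective this

variable (H)

/-- the digraph on `VT H` -/
def E : VT H → VT H → Prop
  | Sum.inl x, Sum.inl y => x = y
  | Sum.inl x, Sum.inr (g, h, m) => (x = g ∧ (m : ℕ) = 0) ∨ (x = h ∧ (m : ℕ) = posn (g⁻¹ * h))
  | Sum.inr _, Sum.inl _ => False
  | Sum.inr (g, h, m), Sum.inr (g', h', m') =>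
      g = g' ∧ h = h' ∧ ((m : ℕ) = (m' : ℕ) ∨ (m' : ℕ) = (m : ℕ) + 1)

variable {H}

lemma E_refl (v : VT H) : E H v v := by
  cases v with
  | inl x => exact rfl
  | inr c => exact ⟨rfl, rfl, Or.inl rfl⟩

def lev : VT H → ℕ
  | Sum.inl _ => 0
  | Sum.inr (_, _, m) => (m : ℕ) + 1

lemma lev_le (v : VT H) : lev v ≤ Fintype.card H + 2 := by
  cases v with
  | inl x => exact Nat.zero_le _
  | inr c => obtain ⟨g, h, m⟩ := c; have := m.isLt; simp only [lev]; omega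

lemma E_lev {v w : VT H} (h : E H v w) : v = w ∨ lev v < lev w := by
  cases v with
  | inl x =>
    cases w with
    | inl y => exact Or.inl (by rw [h])
    | inr c => exact Or.inr (by obtain ⟨g, h', m⟩ := c; simp only [lev]; omega)
  | inr c =>
    cases w with
    | inl y => exact absurd h (by simp [E])
    | inr c' =>
      obtain ⟨g, h', m⟩ := c
      obtain ⟨g', h'', m'⟩ := c'
      obtain ⟨rfl, rfl, hm⟩ := h
      rcases hm with hm | hm
      · exact Or.inl (by rw [Fin.ext hm])
      · exact Or.inr (by simp only [lev]; omega)

variable (H)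

open Classical in
/-- structure matrix -/
noncomputable def am : VT H → VT H → k := fun v w => if E H v w then 1 else 0

variable {k H}

lemma am_self (v : VT H) : am k H v v = 1 := if_pos (E_refl v)

lemma am_ne_zero {v w : VT H} : am k H v w ≠ 0 ↔ E H v w := by
  unfold am; split_ifs with h <;> simp [h]

lemma am_eq_one {v w : VT H} (h : E H v w) : am k H v w = 1 := if_pos h

lemma am_eq_zero {v w : VT H} (h : ¬ E H v w) : am k H v w = 0 := if_neg h

variable (k H)

/-- the evolution multiplication -/
noncomputable def emul : (VT H → k) →ₗ[k] (VT H → k) →ₗ[k] (VT H → k) :=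
  LinearMap.mk₂ k (fun x y => ∑ v, (x v * y v) • am k H v)
    (fun x x' y => by
      simp only [Pi.add_apply, add_mul, add_smul, Finset.sum_add_distrib])
    (fun c x y => by
      simp only [Pi.smul_apply, smul_eq_mul, mul_assoc, ← smul_smul, ← Finset.smul_sum])
    (fun x y y' => by
      simp only [Pi.add_apply, mul_add, add_smul, Finset.sum_add_distrib])
    (fun c x y => by
      simp only [Pi.smul_apply, smul_eq_mul, mul_left_comm, ← smul_smul, ← Finset.smul_sum])

variable {k H}

lemma emul_apply (x y : VT H → k) : emul k H x y = ∑ v, (x v * y v) • am k H v := rfl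

lemma emul_comm (x y : VT H → k) : emul k H x y = emul k H y x := by
  rw [emul_apply, emul_apply]
  exact Finset.sum_congr rfl fun v _ => by rw [mul_comm]

variable (k H)

noncomputable abbrev bV : Module.Basis (VT H) k (VT H → k) := Pi.basisFun k (VT H)

variable {k H}

lemma emul_single_diag (v : VT H) : emul k H (bV k H v) (bV k H v) = am k H v := by
  rw [emul_apply, Finset.sum_eq_single v]
  · simp [Pi.basisFun_apply, Pi.single_apply]
  · intro u _ hu
    simp [Pi.basisFun_apply, Pi.single_apply, Ne.symm hu]
  · intro h; exact absurd (Finset.mem_univ _) h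

lemma emul_single_offdiag {v w : VT H} (hvw : v ≠ w) :
    emul k H (bV k H v) (bV k H w) = 0 := by
  rw [emul_apply]
  refine Finset.sum_eq_zero fun u _ => ?_
  rcases eq_or_ne u v with rfl | hv
  · simp [Pi.basisFun_apply, Pi.single_apply, Ne.symm hvw]
  · simp [Pi.basisFun_apply, Pi.single_apply, Ne.symm hv]

/-- regularity: the rows of `am` span everything -/
lemma single_mem_span (d : ℕ) (v : VT H)
    (hdv : Fintype.card H + 3 ≤ lev v + d) :
    (Pi.single v (1 : k) : VT H → k) ∈ span k (Set.range fun u => am k H u) := by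
  induction d generalizing v with
  | zero => exact absurd hdv (by have := lev_le v; omega)
  | succ d ih =>
    have hrow : am k H v = ∑ w, am k H v w • (Pi.single w (1 : k) : VT H → k) := by
      conv_lhs => rw [← Finset.univ_sum_single (am k H v)]
      refine Finset.sum_congr rfl fun w _ => ?_
      rw [← Pi.single_smul, smul_eq_mul, mul_one]
    have hsplit : am k H v = (Pi.single v (1 : k) : VT H → k)
        + ∑ w ∈ Finset.univ.erase v, am k H v w • (Pi.single w (1 : k) : VT H → k) := by
      conv_lhs => rw [hrow]
      rw [← Finset.add_sum_erase _ _ (Finset.mem_univ v), am_self, one_smul]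
    have h1 : (Pi.single v (1 : k) : VT H → k) = am k H v
        - ∑ w ∈ Finset.univ.erase v, am k H v w • (Pi.single w (1 : k) : VT H → k) := by
      rw [eq_sub_iff_add_eq]
      exact hsplit.symm
    rw [h1]
    refine Submodule.sub_mem _ (Submodule.subset_span ⟨v, rfl⟩) (Submodule.sum_mem _ ?_)
    intro w hw
    rcases eq_or_ne (am k H v w) 0 with hz | hz
    · rw [hz, zero_smul]; exact Submodule.zero_mem _
    · refine Submodule.smul_mem _ _ (ih w ?_)
      have hE := am_ne_zero.mp hz
      rcases E_lev hE with rfl | hlt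
      · exact absurd rfl (Finset.mem_erase.mp hw).1
      · omega

lemma span_am_top : span k (Set.range fun u => am k H u) = ⊤ := by
  rw [eq_top_iff, ← (bV k H).span_eq, Submodule.span_le]
  rintro _ ⟨v, rfl⟩
  have : (bV k H) v = (Pi.single v (1 : k) : VT H → k) := Pi.basisFun_apply k (VT H) v
  rw [this]
  exact single_mem_span (Fintype.card H + 3) v (by omega)

variable (H)

def phi0 (g : H) : Equiv.Perm (VT H) :=
  Equiv.sumCongr (Equiv.mulLeft g)
    ((Equiv.mulLeft g).prodCongr ((Equiv.mulLeft g).prodCongr (Equiv.refl _)))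

variable {H}

@[simp] lemma phi0_inl (g x : H) : phi0 H g (Sum.inl x) = Sum.inl (g * x) := rfl

@[simp] lemma phi0_inr (g x y : H) (m : Fin (Fintype.card H + 2)) :
    phi0 H g (Sum.inr (x, y, m)) = Sum.inr (g * x, g * y, m) := rfl

lemma phi0_mul (g g' : H) : phi0 H (g * g') = phi0 H g * phi0 H g' := by
  apply Equiv.ext
  intro v
  cases v with
  | inl x => simp [Equiv.Perm.mul_apply, mul_assoc]
  | inr c => obtain ⟨a, b, m⟩ := c; simp [Equiv.Perm.mul_apply, mul_assoc]

lemma E_phi0 (g : H) (v w : VT H) : E H (phi0 H g v) (phi0 H g w) ↔ E H v w := by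
  cases v with
  | inl x =>
    cases w with
    | inl y => simp [E]
    | inr c =>
      obtain ⟨a, b, m⟩ := c
      simp [E, mul_assoc]
  | inr c =>
    obtain ⟨a, b, m⟩ := c
    cases w with
    | inl y => simp [E]
    | inr c' =>
      obtain ⟨a', b', m'⟩ := c'
      simp [E]

lemma am_phi0 (g : H) (v w : VT H) : am k H (phi0 H g v) (phi0 H g w) = am k H v w := by
  unfold am
  rw [propext (E_phi0 g v w)]

def permL (σ : Equiv.Perm (VT H)) : (VT H → k) ≃ₗ[k] (VT H → k) :=
  LinearEquiv.funCongrLeft k k σ.symm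

lemma permL_apply (σ : Equiv.Perm (VT H)) (x : VT H → k) (v : VT H) :
    permL σ x v = x (σ.symm v) := rfl

lemma permL_single (σ : Equiv.Perm (VT H)) (w : VT H) :
    permL σ (Pi.single w (1 : k) : VT H → k) = Pi.single (σ w) 1 := by
  funext u
  rw [permL_apply, Pi.single_apply, Pi.single_apply]
  exact if_congr (Equiv.symm_apply_eq σ) rfl rfl

lemma permL_aut {σ : Equiv.Perm (VT H)}
    (hσ : ∀ v w, am k H (σ v) (σ w) = am k H v w) (x y : VT H → k) :
    permL σ (emul k H x y) = emul k H (permL σ x) (permL σ y) := by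
  funext u
  rw [permL_apply, emul_apply, emul_apply, Finset.sum_apply, Finset.sum_apply]
  refine Fintype.sum_equiv σ _ _ fun v => ?_
  simp only [Pi.smul_apply, smul_eq_mul, permL_apply, Equiv.symm_apply_apply]
  have h1 : am k H v (σ.symm u) = am k H (σ v) u := by
    have := hσ v (σ.symm u)
    rw [Equiv.apply_symm_apply] at this
    exact this.symm
  rw [h1]

variable (k H)

/-- The evolution algebra realizing `H` as automorphism group. -/
noncomputable def EA : EvolutionAlgebra k where
  carrier := VT H → k
  mul := emul k H
  mul_comm := emul_comm
  natural := ⟨VT H, inferInstance, bV k H, fun _ _ hij => emul_single_offdiag hij⟩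

lemma EA_regular : (EA k H).IsRegular := by
  show span k {z : VT H → k | ∃ x y, z = emul k H x y} = ⊤
  have h := span_am_top (k := k) (H := H)
  rw [eq_top_iff, ← h, Submodule.span_le]
  rintro _ ⟨v, rfl⟩
  exact Submodule.subset_span ⟨bV k H v, bV k H v, (emul_single_diag v).symm⟩

/-- The homomorphism from `H` to the automorphism group. -/
noncomputable def Phi : H →* ↥(EA k H).Aut where
  toFun g := ⟨permL (phi0 H g), fun x y => permL_aut (fun v w => am_phi0 g v w) x y⟩
  map_one' := by
    apply Subtype.ext
    apply LinearEquiv.ext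
    intro x
    funext u
    show x ((phi0 H 1).symm u) = x u
    congr 1
    rw [Equiv.symm_apply_eq]
    cases u with
    | inl a => simp
    | inr c => obtain ⟨a, b, m⟩ := c; simp
  map_mul' g g' := by
    apply Subtype.ext
    apply LinearEquiv.ext
    intro x
    funext u
    show x ((phi0 H (g * g')).symm u) = x ((phi0 H g').symm ((phi0 H g).symm u))
    congr 1
    rw [phi0_mul]
    rfl

variable {k H}

section Rigid

lemma chain_out {g h : H} {m : Fin (Fintype.card H + 2)} {x : VT H}
    (hx : E H (Sum.inr (g, h, m)) x) (hne : x ≠ Sum.inr (g, h, m)) :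
    ∃ hlt : (m : ℕ) + 1 < Fintype.card H + 2,
      x = Sum.inr (g, h, ⟨(m : ℕ) + 1, hlt⟩) := by
  cases x with
  | inl y => exact absurd hx (by simp [E])
  | inr c =>
    obtain ⟨g', h', m'⟩ := c
    obtain ⟨rfl, rfl, hm⟩ := hx
    rcases hm with hm | hm
    · exact absurd (by rw [show m' = m from Fin.ext hm.symm]) hne
    · have hlt : (m : ℕ) + 1 < Fintype.card H + 2 := by rw [← hm]; exact m'.isLt
      exact ⟨hlt, by rw [show m' = ⟨(m : ℕ) + 1, hlt⟩ from Fin.ext (by simp [hm])]⟩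

lemma maps_inl (σ : Equiv.Perm (VT H)) (hE : ∀ v w, E H v w ↔ E H (σ v) (σ w)) :
    ∀ g : H, ∃ g', σ (Sum.inl g) = Sum.inl g' := by
  intro g
  cases hc : σ (Sum.inl g) with
  | inl g' => exact ⟨g', rfl⟩
  | inr c =>
    exfalso
    obtain ⟨a, b, mm⟩ := c
    have hposlt : posn ((g : H)⁻¹ * g) < Fintype.card H + 2 := posn_lt _
    set m2 : Fin (Fintype.card H + 2) := ⟨posn ((g : H)⁻¹ * g), hposlt⟩ with hm2
    have e1 : E H (Sum.inl g) (Sum.inr (g, g, (0 : Fin (Fintype.card H + 2)))) :=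
      Or.inl ⟨rfl, rfl⟩
    have e2 : E H (Sum.inl g) (Sum.inr (g, g, m2)) := Or.inr ⟨rfl, rfl⟩
    have hne : (Sum.inr (g, g, (0 : Fin (Fintype.card H + 2))) : VT H) ≠ Sum.inr (g, g, m2) := by
      have := posn_pos ((g : H)⁻¹ * g)
      simp only [ne_eq, Sum.inr.injEq, Prod.mk.injEq, true_and]
      intro h'
      rw [Fin.ext_iff] at h'
      simp only [Fin.val_zero, hm2] at h'
      omega
    have i1 := (hE _ _).mp e1
    have i2 := (hE _ _).mp e2
    rw [hc] at i1 i2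
    have n1 : σ (Sum.inr (g, g, (0 : Fin (Fintype.card H + 2)))) ≠ Sum.inr (a, b, mm) := by
      rw [← hc]
      intro hh
      exact (by simp : (Sum.inr (g, g, (0 : Fin (Fintype.card H + 2))) : VT H) ≠ Sum.inl g)
        (σ.injective hh)
    have n2 : σ (Sum.inr (g, g, m2)) ≠ Sum.inr (a, b, mm) := by
      rw [← hc]
      intro hh
      exact (by simp : (Sum.inr (g, g, m2) : VT H) ≠ Sum.inl g) (σ.injective hh)
    obtain ⟨l1, q1⟩ := chain_out i1 n1
    obtain ⟨l2, q2⟩ := chain_out i2 n2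
    exact hne (σ.injective (q1.trans q2.symm))

lemma maps_inr (σ : Equiv.Perm (VT H)) (hE : ∀ v w, E H v w ↔ E H (σ v) (σ w))
    (hE' : ∀ v w, E H v w ↔ E H (σ.symm v) (σ.symm w)) :
    ∀ c, ∃ c', σ (Sum.inr c) = Sum.inr c' := by
  intro c
  cases hc : σ (Sum.inr c) with
  | inr c' => exact ⟨c', rfl⟩
  | inl x =>
    exfalso
    obtain ⟨x', hx'⟩ := maps_inl σ.symm hE' x
    have : σ.symm (Sum.inl x) = Sum.inr c := by
      rw [← hc, Equiv.symm_apply_apply]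
    rw [hx'] at this
    exact Sum.inl_ne_inr this

theorem rigid (σ : Equiv.Perm (VT H)) (hE : ∀ v w, E H v w ↔ E H (σ v) (σ w)) :
    ∃ t : H, σ = phi0 H t := by
  have hE' : ∀ v w, E H v w ↔ E H (σ.symm v) (σ.symm w) := by
    intro v w
    conv_lhs => rw [← σ.apply_symm_apply v, ← σ.apply_symm_apply w]
    exact (hE _ _).symm
  have hE'' : ∀ v w, E H v w ↔ E H (σ.symm.symm v) (σ.symm.symm w) := by
    simpa using hE
  choose τ hτ using maps_inl σ hE
  choose ρ hρ using maps_inr σ hE hE'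
  choose ρ' hρ' using maps_inr σ.symm hE' hE''
  have head0 : ∀ g h : H, (ρ (g, h, 0)).2.2 = (0 : Fin (Fintype.card H + 2)) := by
    intro g h
    rcases h' : ρ (g, h, (0 : Fin (Fintype.card H + 2))) with ⟨a, b, m0⟩
    show m0 = 0
    by_contra hm
    obtain ⟨p, hp⟩ : ∃ p, (m0 : ℕ) = p + 1 := by
      rcases Nat.exists_eq_succ_of_ne_zero (fun h0 => hm (Fin.ext h0)) with ⟨p, hp⟩
      exact ⟨p, hp⟩
    have hplt : p < Fintype.card H + 2 := by have := m0.isLt; omega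
    have epred : E H (Sum.inr (a, b, (⟨p, hplt⟩ : Fin _))) (Sum.inr (a, b, m0)) :=
      ⟨rfl, rfl, Or.inr (by simp [hp])⟩
    have hstep := (hE' _ _).mp epred
    have hsym : σ.symm (Sum.inr (a, b, m0)) = Sum.inr (g, h, 0) := by
      rw [Equiv.symm_apply_eq, hρ, h']
    rw [hsym] at hstep
    rw [hρ' (a, b, ⟨p, hplt⟩)] at hstep
    rcases h'' : ρ' (a, b, (⟨p, hplt⟩ : Fin _)) with ⟨cg, ch, cm⟩
    rw [h''] at hstep
    obtain ⟨rfl, rfl, hmm⟩ := hstep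
    have hcm0 : (cm : ℕ) = 0 := by
      rcases hmm with h1 | h1
      · simpa using h1
      · exfalso; simp at h1
    have hfix : σ.symm (Sum.inr (a, b, (⟨p, hplt⟩ : Fin _))) = Sum.inr (cg, ch, 0) := by
      rw [hρ' _, h'', show cm = 0 from Fin.ext (by simpa using hcm0)]
    have hinj := σ.symm.injective (hfix.trans hsym.symm)
    simp only [Sum.inr.injEq, Prod.mk.injEq, true_and, Fin.ext_iff] at hinj
    omega
  have hhead : ∀ g h : H, σ (Sum.inr (g, h, 0)) =
      Sum.inr ((ρ (g, h, 0)).1, (ρ (g, h, 0)).2.1, 0) := by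
    intro g h
    rcases h' : ρ (g, h, (0 : Fin (Fintype.card H + 2))) with ⟨a, b, m0⟩
    have h0 : m0 = 0 := by have := head0 g h; rwa [h'] at this
    rw [hρ (g, h, 0), h', h0]
  have hchain : ∀ (g h : H) (p : ℕ) (hp : p < Fintype.card H + 2),
      σ (Sum.inr (g, h, ⟨p, hp⟩)) =
        Sum.inr ((ρ (g, h, 0)).1, (ρ (g, h, 0)).2.1, ⟨p, hp⟩) := by
    intro g h p
    induction p with
    | zero =>
      intro hp
      have h0 := hhead g h
      rw [show ((⟨0, hp⟩ : Fin (Fintype.card H + 2))) = 0 from Fin.ext (by simp)]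
      exact h0
    | succ p ih =>
      intro hp
      have hp' : p < Fintype.card H + 2 := by omega
      have estep : E H (Sum.inr (g, h, (⟨p, hp'⟩ : Fin _))) (Sum.inr (g, h, ⟨p + 1, hp⟩)) :=
        ⟨rfl, rfl, Or.inr rfl⟩
      have i1 := (hE _ _).mp estep
      rw [ih hp'] at i1
      have hne : σ (Sum.inr (g, h, (⟨p + 1, hp⟩ : Fin _))) ≠
          Sum.inr ((ρ (g, h, 0)).1, (ρ (g, h, 0)).2.1, (⟨p, hp'⟩ : Fin _)) := by
        rw [← ih hp']
        intro hh
        have := σ.injective hh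
        simp only [Sum.inr.injEq, Prod.mk.injEq, true_and, Fin.ext_iff] at this
        omega
      obtain ⟨l1, q1⟩ := chain_out i1 hne
      rw [q1]
  have hgh : ∀ g h : H, (ρ (g, h, 0)).1 = τ g ∧ (ρ (g, h, 0)).2.1 = τ h ∧
      g⁻¹ * h = ((ρ (g, h, 0)).1)⁻¹ * (ρ (g, h, 0)).2.1 := by
    intro g h
    have e1 : E H (Sum.inl g) (Sum.inr (g, h, (0 : Fin (Fintype.card H + 2)))) :=
      Or.inl ⟨rfl, rfl⟩
    have i1 := (hE _ _).mp e1
    rw [hτ g, hhead g h] at i1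
    have hG : (ρ (g, h, 0)).1 = τ g := by
      rcases i1 with ⟨h1, _⟩ | ⟨_, h2⟩
      · exact h1.symm
      · exfalso
        have := posn_pos (((ρ (g, h, 0)).1)⁻¹ * (ρ (g, h, 0)).2.1)
        simp only [Fin.val_zero] at h2
        omega
    have e2 : E H (Sum.inl h)
        (Sum.inr (g, h, (⟨posn (g⁻¹ * h), posn_lt _⟩ : Fin (Fintype.card H + 2)))) :=
      Or.inr ⟨rfl, rfl⟩
    have i2 := (hE _ _).mp e2
    rw [hτ h, hchain g h (posn (g⁻¹ * h)) (posn_lt _)] at i2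
    rcases i2 with ⟨_, h2⟩ | ⟨h1, h2⟩
    · exfalso
      have := posn_pos (g⁻¹ * h)
      simp only [Fin.val_zero] at h2
      omega
    · exact ⟨hG, h1.symm, posn_inj h2⟩
  have hτt : ∀ h : H, τ h = τ 1 * h := by
    intro h
    obtain ⟨hG, hH, hrel⟩ := hgh 1 h
    rw [hG, hH] at hrel
    rw [inv_one, one_mul] at hrel
    exact (inv_mul_eq_iff_eq_mul.mp hrel.symm)
  refine ⟨τ 1, Equiv.ext fun v => ?_⟩
  cases v with
  | inl g => rw [hτ g, hτt g]; rfl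
  | inr c =>
    obtain ⟨g, h, m⟩ := c
    obtain ⟨hG, hH, _⟩ := hgh g h
    have hc := hchain g h (m : ℕ) m.isLt
    rw [show ((⟨(m : ℕ), m.isLt⟩ : Fin (Fintype.card H + 2))) = m from Fin.ext rfl] at hc
    rw [hc, hG, hH, hτt g, hτt h]
    rfl

end Rigid

variable (k H)

lemma Phi_injective : Function.Injective (Phi k H) := by
  intro g g' hgg
  have h1 : (Pi.single (phi0 H g (Sum.inl 1)) (1 : k) : VT H → k) = Pi.single (phi0 H g' (Sum.inl 1)) 1 := by
    rw [← permL_single (phi0 H g) (Sum.inl 1), ← permL_single (phi0 H g') (Sum.inl 1)]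
    exact DFunLike.congr_fun (congrArg Subtype.val hgg) _
  rw [phi0_inl, phi0_inl, mul_one, mul_one] at h1
  have h2 := congrFun h1 (Sum.inl g)
  rw [Pi.single_apply, Pi.single_apply, if_pos rfl] at h2
  by_contra hne
  rw [if_neg (by simp [hne])] at h2
  exact one_ne_zero h2

lemma Phi_surjective : Function.Surjective (Phi k H) := by
  rintro ⟨φ, hφ⟩
  have hφ' : ∀ x y : VT H → k, φ (emul k H x y) = emul k H (φ x) (φ y) := hφ
  obtain ⟨σ, lam, hlam0, hl⟩ := monomial_of_aut (bV k H) (emul k H)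
    (fun _ _ hij => emul_single_offdiag hij) (EA_regular k H) φ hφ'
  have hrel : ∀ v w, am k H v w * lam w = lam v ^ 2 * am k H (σ v) (σ w) := by
    intro v w
    have h := aut_rel (bV k H) (emul k H) φ hφ' σ lam hl v w
    rwa [emul_single_diag, emul_single_diag, Pi.basisFun_repr, Pi.basisFun_repr] at h
  have hlam1 : ∀ v, lam v = 1 := by
    intro v
    have h := hrel v v
    rw [am_self, am_self, one_mul, mul_one] at h
    have h2 : lam v * 1 = lam v * lam v := by conv_lhs => rw [mul_one, h, sq]
    exact (mul_left_cancel₀ (hlam0 v) h2).symm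
  have hamE : ∀ v w, am k H v w = am k H (σ v) (σ w) := by
    intro v w
    have h := hrel v w
    rwa [hlam1, hlam1, one_pow, mul_one, one_mul] at h
  have hEE : ∀ v w, E H v w ↔ E H (σ v) (σ w) := by
    intro v w
    constructor
    · intro he
      exact am_ne_zero.mp (by rw [← hamE]; exact am_ne_zero.mpr he)
    · intro he
      exact am_ne_zero.mp (by rw [hamE v w]; exact am_ne_zero.mpr he)
  obtain ⟨t, rfl⟩ := rigid σ hEE
  refine ⟨t, ?_⟩
  apply Subtype.ext
  apply LinearEquiv.toLinearMap_injective
  apply (bV k H).ext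
  intro v
  have hx := hl v
  rw [hlam1 v, one_smul] at hx
  have hL : ((Phi k H) t).val ((bV k H) v) = (bV k H) (phi0 H t v) := by
    show permL (phi0 H t) ((bV k H) v) = _
    rw [Pi.basisFun_apply, Pi.basisFun_apply, permL_single]
  exact hL.trans hx.symm

/-- The automorphism group of `EA k H` is isomorphic to `H`. -/
noncomputable def autEquiv : ↥(EA k H).Aut ≃* H :=
  (MulEquiv.ofBijective (Phi k H) ⟨Phi_injective k H, Phi_surjective k H⟩).symm

end EvoCons

theorem aut_finite_of_regular {k : Type u} [Field k] (A : EvolutionAlgebra k)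
    (hreg : A.IsRegular) : Finite ↥A.Aut := by
  obtain ⟨ι, hι, b, hd⟩ := A.natural
  haveI := hι
  have h : {e : A.carrier ≃ₗ[k] A.carrier |
      ∀ x y, e (A.mul x y) = A.mul (e x) (e y)}.Finite :=
    setOf_aut_finite b A.mul hd hreg
  exact h.to_subtype


/-- A group `G` is finite if and only if it is (isomorphic to) the automorphism group of
some finite-dimensional regular evolution algebra over `k`. -/
theorem finite_iff_aut_of_regular_evolution_algebra (k : Type u) [Field k]
    (G : Type v) [Group G] :
    Finite G ↔ ∃ A : EvolutionAlgebra k, A.IsRegular ∧ Nonempty (A.Aut ≃* G) := by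
  constructor
  · intro hG
    obtain ⟨H, gH, fH, ⟨me⟩⟩ :
        ∃ (H : Type u) (_ : Group H) (_ : Fintype H), Nonempty (G ≃* H) :=
      Finite.exists_type_univ_nonempty_mulEquiv G
    letI : DecidableEq H := Classical.decEq H
    exact ⟨EvoCons.EA k H, EvoCons.EA_regular k H,
      ⟨(EvoCons.autEquiv k H).trans me.symm⟩⟩
  · rintro ⟨A, hreg, ⟨me⟩⟩
    haveI := aut_finite_of_regular A hreg
    exact Finite.of_equiv _ me.toEquiv
end

section
/- Let X be a finite-dimensional regular evolution algebra over a field k with natural basis b : ι → X (ι finite). If b̂ : ι → X is any other natural basis of X, then there exist a permutation σ of ι and nonzero scalars λ_i ∈ k such that b̂ i = λ_i • b (σ i) for all i ∈ ι. -/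
/-- **Uniqueness of the natural basis of a regular evolution algebra.**
Let `X` be a finite-dimensional evolution algebra over a field `k` (a finite-dimensional
`k`-vector space with a bilinear commutative multiplication `mul`) which is regular
(the span of all products is everything), and let `b` be a natural basis
(distinct basis vectors multiply to zero).  Then any other natural basis `b'` is obtained
from `b` by a permutation of the index set and rescaling by nonzero scalars. -/
theorem natural_basis_unique_of_regular
    {k X ι : Type*} [Field k] [AddCommGroup X] [Module k X] [FiniteDimensional k X]
    [Fintype ι]
    (mul : X →ₗ[k] X →ₗ[k] X) (hcomm : ∀ x y : X, mul x y = mul y x)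
    (b : Module.Basis ι k X) (hb : ∀ i j, i ≠ j → mul (b i) (b j) = 0)
    (hreg : Submodule.span k {z : X | ∃ x y : X, z = mul x y} = ⊤)
    (b' : Module.Basis ι k X) (hb' : ∀ i j, i ≠ j → mul (b' i) (b' j) = 0) :
    ∃ (σ : Equiv.Perm ι) (lam : ι → k), (∀ i, lam i ≠ 0) ∧ ∀ i, b' i = lam i • b (σ i) := by
  classical
  set d : ι → X := fun i => mul (b i) (b i) with hd
  set c : ι → ι → k := fun i j => b.repr (b' i) j with hc
  have key : ∀ (j : ι) (y : X), mul (b j) y = b.repr y j • d j := by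
    intro j y
    conv_lhs => rw [← b.sum_repr y]
    rw [map_sum, Finset.sum_eq_single j]
    · rw [map_smul]
    · intro m _ hm
      rw [map_smul, hb j m (Ne.symm hm), smul_zero]
    · intro h; exact absurd (Finset.mem_univ _) h
  have hxy : ∀ x y : X, mul x y = ∑ j, (b.repr x j * b.repr y j) • d j := by
    intro x y
    conv_lhs => rw [← b.sum_repr x]
    rw [map_sum, LinearMap.sum_apply]
    refine Finset.sum_congr rfl fun j _ => ?_
    rw [map_smul, LinearMap.smul_apply, key, smul_smul]
  have hspan : Submodule.span k (Set.range d) = ⊤ := by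
    rw [eq_top_iff, ← hreg]
    refine Submodule.span_le.2 ?_
    rintro z ⟨x, y, rfl⟩
    rw [hxy]
    exact Submodule.sum_mem _ fun j _ =>
      Submodule.smul_mem _ _ (Submodule.subset_span ⟨j, rfl⟩)
  have hcard : Fintype.card ι = Module.finrank k X :=
    (Module.finrank_eq_card_basis b).symm
  have hli : LinearIndependent k d :=
    linearIndependent_of_top_le_span_of_card_eq_finrank hspan.ge hcard
  have horth : ∀ i l, i ≠ l → ∀ j, c i j * c l j = 0 := by
    intro i l hil j
    have h0 : ∑ j, (c i j * c l j) • d j = 0 := by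
      rw [← hxy, hb' i l hil]
    exact Fintype.linearIndependent_iff.1 hli (fun j => c i j * c l j) h0 j
  have hne : ∀ i, ∃ j, c i j ≠ 0 := by
    intro i
    by_contra h
    push_neg at h
    have h0 : b.repr (b' i) = 0 := Finsupp.ext h
    exact b'.ne_zero i (b.repr.map_eq_zero_iff.1 h0)
  choose f hf using hne
  have hfinj : Function.Injective f := by
    intro i l h
    by_contra hil
    exact absurd (horth i l hil (f i)) (mul_ne_zero (hf i) (h ▸ hf l))
  have hbij : Function.Bijective f := Finite.injective_iff_bijective.mp hfinj
  have hsingle : ∀ i j, j ≠ f i → c i j = 0 := by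
    intro i j hj
    by_contra hcij
    obtain ⟨l, hl⟩ := hbij.2 j
    have hil : i ≠ l := fun h => hj (by rw [h, hl])
    exact absurd (horth i l hil j) (mul_ne_zero hcij (hl ▸ hf l))
  refine ⟨Equiv.ofBijective f hbij, fun i => c i (f i), fun i => hf i, fun i => ?_⟩
  have hrepr : b' i = ∑ j, c i j • b j := (b.sum_repr (b' i)).symm
  rw [hrepr, Finset.sum_eq_single (f i)]
  · rfl
  · intro j _ hj; rw [hsingle i j hj, zero_smul]
  · intro h; exact absurd (Finset.mem_univ _) h
end

section
/- Let X be a finite-dimensional evolution algebra over a field k with natural basis b : ι → X, and let M_B be the structure matrix of X relative to b, i.e., the matrix whose (k,i) entry ω_{ki} is defined by b i * b i = Σ_k ω_{ki} • b k. Then X is regular (X² = X) if and only if M_B is an invertible matrix. -/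
open scoped BigOperators

/-- An evolution algebra is regular (`X² = X`) if and only if its structure matrix relative
to a natural basis is invertible.  Here `X` is a finite-dimensional evolution algebra over a
field `k` with natural basis `b : ι → X`, and `M` is the structure matrix: its `(j, i)` entry
`ω_{ji}` is determined by `b i * b i = ∑ j, ω_{ji} • b j`. -/
theorem regular_iff_structure_matrix_invertible
    {k X ι : Type*} [Field k] [AddCommGroup X] [Module k X] [FiniteDimensional k X]
    [Fintype ι] [DecidableEq ι]
    (mul : X →ₗ[k] X →ₗ[k] X) (hcomm : ∀ x y : X, mul x y = mul y x)
    (b : Module.Basis ι k X) (hb : ∀ i j, i ≠ j → mul (b i) (b j) = 0)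
    (M : Matrix ι ι k) (hM : ∀ i, mul (b i) (b i) = ∑ j, M j i • b j) :
    Submodule.span k {z : X | ∃ x y : X, z = mul x y} = ⊤ ↔ IsUnit M := by
  classical
  set g : ι → X := fun i => mul (b i) (b i) with hg
  have key : ∀ x y : X, mul x y = ∑ i, (b.repr x i * b.repr y i) • g i := by
    intro x y
    calc mul x y = ∑ i, b.repr x i • mul (b i) y := by
          conv_lhs => rw [← b.sum_repr x]
          rw [map_sum, LinearMap.sum_apply]
          simp
      _ = ∑ i, b.repr x i • ∑ j, b.repr y j • mul (b i) (b j) := by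
          refine Finset.sum_congr rfl fun i _ => ?_
          congr 1
          conv_lhs => rw [← b.sum_repr y]
          rw [map_sum]; simp only [map_smul]
      _ = ∑ i, (b.repr x i * b.repr y i) • g i := by
          refine Finset.sum_congr rfl fun i _ => ?_
          rw [Finset.smul_sum, Finset.sum_eq_single i]
          · simp [smul_smul, hg]
          · intro j _ hj
            simp [hb i j hj.symm]
          · simp
  have hspan : Submodule.span k {z : X | ∃ x y : X, z = mul x y}
      = Submodule.span k (Set.range g) := by
    refine le_antisymm (Submodule.span_le.2 ?_) (Submodule.span_le.2 ?_)
    · rintro z ⟨x, y, rfl⟩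
      rw [key x y]
      exact Submodule.sum_mem _ fun i _ =>
        Submodule.smul_mem _ _ (Submodule.subset_span ⟨i, rfl⟩)
    · rintro z ⟨i, rfl⟩
      exact Submodule.subset_span ⟨b i, b i, rfl⟩
  rw [hspan]
  have hcol : ∀ i, b.equivFun (g i) = Matrix.transpose M i := by
    intro i
    ext j
    rw [hg]
    simp only [hM i, Module.Basis.equivFun_apply, map_sum, map_smul, Finsupp.coe_finset_sum,
      Finset.sum_apply, Finsupp.coe_smul, Pi.smul_apply, Module.Basis.repr_self,
      Finsupp.single_apply, Matrix.transpose_apply, smul_eq_mul]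
    simp [Finset.sum_ite_eq]
  have hmap : (Submodule.span k (Set.range g)).map (b.equivFun : X →ₗ[k] (ι → k))
      = Submodule.span k (Set.range (Matrix.transpose M)) := by
    rw [Submodule.map_span, ← Set.range_comp]
    congr 1
    exact congrArg Set.range (funext hcol)
  have htop : Submodule.span k (Set.range g) = ⊤ ↔
      Submodule.span k (Set.range (Matrix.transpose M)) = ⊤ := by
    rw [← hmap]
    constructor
    · intro h
      rw [h, Submodule.map_top]
      exact LinearMap.range_eq_top.2 b.equivFun.surjective
    · intro h
      have := congrArg (Submodule.comap (b.equivFun : X →ₗ[k] (ι → k))) h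
      rwa [Submodule.comap_map_eq_of_injective
        (f := (b.equivFun : X →ₗ[k] (ι → k))) b.equivFun.injective,
        Submodule.comap_top] at this
  rw [htop]
  change Submodule.span k (Set.range (Matrix.col M)) = ⊤ ↔ IsUnit M
  rw [← Matrix.range_mulVecLin, LinearMap.range_eq_top]
  exact Matrix.mulVec_surjective_iff_isUnit
end

section
/- Let G₁ = (V₁, E₁) and G₂ = (V₂, E₂) be finite simple graphs. Then the evolution algebras X(G₁) and X(G₂) over k are isomorphic as k-algebras (i.e., there is a k-linear bijection commuting with multiplication) if and only if the graphs G₁ and G₂ are isomorphic. -/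
open scoped BigOperators

variable (k : Type*) [Field k]

section Defs

variable {V : Type*} [Fintype V] [DecidableEq V]

/-- The square `b i * b i` of the `i`-th natural basis vector of the evolution algebra
`X(G)` attached to a simple graph `G`: for a vertex `v`, `b_v * b_v = b_v`; for an edge
`e = {v, w}`, `b_e * b_e = b_e + b_v + b_w`. -/
noncomputable def graphSq (G : SimpleGraph V) [DecidableRel G.Adj] :
    (V ⊕ ↥G.edgeSet) → (V ⊕ ↥G.edgeSet) → k
  | Sum.inl v => Pi.single (Sum.inl v) 1
  | Sum.inr e => Pi.single (Sum.inr e) 1 +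
      ∑ v ∈ Finset.univ.filter (· ∈ (e : Sym2 V)), Pi.single (Sum.inl v) 1

/-- The multiplication of the evolution algebra `X(G)` attached to a simple graph `G`,
as a `k`-bilinear map on the space of functions `(V ⊕ G.edgeSet) → k`.  Distinct natural
basis vectors multiply to zero, and the squares are given by `graphSq`. -/
noncomputable def graphMul (G : SimpleGraph V) [DecidableRel G.Adj] :
    ((V ⊕ ↥G.edgeSet) → k) →ₗ[k] ((V ⊕ ↥G.edgeSet) → k) →ₗ[k] ((V ⊕ ↥G.edgeSet) → k) :=
  LinearMap.mk₂ k (fun x y => ∑ i, (x i * y i) • graphSq k G i)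
    (by intro x x' y; simp [add_mul, add_smul, Finset.sum_add_distrib])
    (by intro c x y; simp [Finset.smul_sum, smul_smul, mul_assoc])
    (by intro x y y'; simp [mul_add, add_smul, Finset.sum_add_distrib])
    (by intro c x y; simp [Finset.smul_sum, smul_smul, mul_assoc, mul_left_comm])

set_option linter.unusedSectionVars false

variable (G : SimpleGraph V) [DecidableRel G.Adj]

lemma graphSq_inl_apply (v : V) (j : V ⊕ ↥G.edgeSet) :
    graphSq k G (Sum.inl v) j = if j = Sum.inl v then 1 else 0 := by
  simp [graphSq, Pi.single_apply]

lemma graphSq_apply_inr (i : V ⊕ ↥G.edgeSet) (f : ↥G.edgeSet) :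
    graphSq k G i (Sum.inr f) = if i = Sum.inr f then 1 else 0 := by
  cases i with
  | inl v => simp [graphSq, Pi.single_apply]
  | inr e =>
    simp [graphSq, Pi.single_apply, Finset.sum_apply,
      Finset.sum_ite_eq, eq_comm]

lemma graphSq_inr_apply_inl (e : ↥G.edgeSet) (w : V) :
    graphSq k G (Sum.inr e) (Sum.inl w) = if w ∈ (e : Sym2 V) then 1 else 0 := by
  classical
  simp only [graphSq, Pi.add_apply, Pi.single_apply, Finset.sum_apply, Sum.inl.injEq]
  rw [if_neg (by simp), Finset.sum_ite_eq]
  simp [Finset.mem_filter]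

lemma graphMul_apply (x y : (V ⊕ ↥G.edgeSet) → k) (j : V ⊕ ↥G.edgeSet) :
    graphMul k G x y j = ∑ i, x i * y i * graphSq k G i j := by
  simp [graphMul, Finset.sum_apply, mul_assoc]

lemma sq_coeffs_zero (d : (V ⊕ ↥G.edgeSet) → k)
    (h : ∑ l, d l • graphSq k G l = 0) : ∀ l, d l = 0 := by
  have h' : ∀ j, ∑ l, d l * graphSq k G l j = 0 := by
    intro j
    have := congrFun h j
    simpa [Finset.sum_apply] using this
  have he : ∀ f : ↥G.edgeSet, d (Sum.inr f) = 0 := by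
    intro f
    have := h' (Sum.inr f)
    simpa [graphSq_apply_inr, mul_ite, Finset.sum_ite_eq'] using this
  intro l
  cases l with
  | inr f => exact he f
  | inl v =>
    have := h' (Sum.inl v)
    rw [Fintype.sum_sum_type] at this
    simpa [graphSq_inl_apply, he, mul_ite, Finset.sum_ite_eq'] using this

lemma graphMul_single (i j : V ⊕ ↥G.edgeSet) :
    graphMul k G (Pi.single i 1) (Pi.single j 1) =
      if i = j then graphSq k G i else 0 := by
  simp only [graphMul, LinearMap.mk₂_apply, Pi.single_apply]
  split
  · next h =>
    subst h
    rw [Finset.sum_eq_single i] <;> simp +contextual [Pi.single_apply, eq_comm]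
  · next h =>
    apply Finset.sum_eq_zero
    intro l _
    rcases eq_or_ne l i with rfl | hl
    · simp [if_neg (Ne.symm h), eq_comm]
    · simp [hl]

lemma pi_single_eq_fun (i : V ⊕ ↥G.edgeSet) :
    (fun j => if i = j then (1:k) else 0) = Pi.single i 1 := by
  funext j
  simp [Pi.single_apply, eq_comm]

end Defs

/-- Two finite simple graphs have isomorphic evolution algebras (as `k`-algebras, i.e.
via a `k`-linear bijection commuting with the multiplications) if and only if the graphs
themselves are isomorphic. -/
theorem graphEvolutionAlgebra_iso_iff {V₁ V₂ : Type*} [Fintype V₁] [DecidableEq V₁]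
    [Fintype V₂] [DecidableEq V₂]
    (G₁ : SimpleGraph V₁) (G₂ : SimpleGraph V₂)
    [DecidableRel G₁.Adj] [DecidableRel G₂.Adj] :
    (∃ ψ : ((V₁ ⊕ ↥G₁.edgeSet) → k) ≃ₗ[k] ((V₂ ⊕ ↥G₂.edgeSet) → k),
        ∀ x y : (V₁ ⊕ ↥G₁.edgeSet) → k,
          ψ (graphMul k G₁ x y) = graphMul k G₂ (ψ x) (ψ y)) ↔
      Nonempty (G₁ ≃g G₂) := by
  classical
  constructor
  · rintro ⟨ψ, hψ⟩
    set E : (V₁ ⊕ ↥G₁.edgeSet) → ((V₂ ⊕ ↥G₂.edgeSet) → k) :=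
      fun i => ψ (Pi.single i 1) with hEdef
    -- orthogonality of the images of the basis vectors
    have horth : ∀ i j, i ≠ j → ∀ l, E i l * E j l = 0 := by
      intro i j hij
      have h0 : graphMul k G₂ (E i) (E j) = 0 := by
        rw [hEdef]
        simp only
        rw [← hψ, graphMul_single, if_neg hij, map_zero]
      have h1 : ∑ l, (E i l * E j l) • graphSq k G₂ l = 0 := h0
      exact sq_coeffs_zero k G₂ _ h1
    -- ψ in terms of E
    have hBasis : ∀ x, ψ x = ∑ i, x i • E i := by
      intro x
      conv_lhs => rw [pi_eq_sum_univ x, map_sum]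
      refine Finset.sum_congr rfl fun i _ => ?_
      rw [map_smul, pi_single_eq_fun]
    -- each coordinate functional hits some E i
    have hexu : ∀ l, ∃ i, E i l ≠ 0 := by
      intro l
      by_contra hall
      push_neg at hall
      have h1 : (Pi.single l 1 : (V₂ ⊕ ↥G₂.edgeSet) → k) l = 1 := by simp
      have h2 : ψ (ψ.symm (Pi.single l 1)) = Pi.single l 1 := ψ.apply_symm_apply _
      rw [hBasis] at h2
      have := congrFun h2 l
      simp only [Finset.sum_apply, Pi.smul_apply, smul_eq_mul] at this
      rw [Finset.sum_eq_zero (fun i _ => by rw [hall i, mul_zero])] at this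
      rw [h1] at this
      exact one_ne_zero this.symm
    choose σ hσ using hexu
    have huniq : ∀ l i, E i l ≠ 0 → i = σ l := by
      intro l i hi
      by_contra hne
      exact hi (by
        have := horth i (σ l) hne l
        rcases mul_eq_zero.mp this with h | h
        · exact h
        · exact absurd h (hσ l))
    have hσsurj : Function.Surjective σ := by
      intro i
      have hEne : E i ≠ 0 := by
        intro h
        have : (Pi.single i 1 : (V₁ ⊕ ↥G₁.edgeSet) → k) = 0 := by
          apply ψ.injective
          rw [map_zero]; exact h
        have := congrFun this i
        simp at this
      obtain ⟨l, hl⟩ := Function.ne_iff.mp hEne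
      exact ⟨l, (huniq l i hl).symm⟩
    have hcard : Fintype.card (V₂ ⊕ ↥G₂.edgeSet) = Fintype.card (V₁ ⊕ ↥G₁.edgeSet) := by
      have h1 := ψ.finrank_eq
      rw [Module.finrank_pi, Module.finrank_pi] at h1
      exact h1.symm
    have hσbij : Function.Bijective σ :=
      (Fintype.bijective_iff_surjective_and_card σ).mpr ⟨hσsurj, hcard⟩
    set τ : (V₁ ⊕ ↥G₁.edgeSet) ≃ (V₂ ⊕ ↥G₂.edgeSet) := (Equiv.ofBijective σ hσbij).symm
      with hτdef
    have hστ : ∀ i, σ (τ i) = i := fun i => (Equiv.ofBijective σ hσbij).apply_symm_apply i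
    have hτσ : ∀ l, τ (σ l) = l := fun l => (Equiv.ofBijective σ hσbij).symm_apply_apply l
    set α : (V₁ ⊕ ↥G₁.edgeSet) → k := fun i => E i (τ i) with hαdef
    have hα : ∀ i, α i ≠ 0 := by
      intro i
      have := hσ (τ i)
      rwa [hστ] at this
    have hE : ∀ i, E i = α i • (Pi.single (τ i) 1 : (V₂ ⊕ ↥G₂.edgeSet) → k) := by
      intro i
      funext l
      rcases eq_or_ne l (τ i) with rfl | hl
      · simp [hαdef]
      · have h1 : E i l = 0 := by
          by_contra h
          have hi := huniq l i h
          have : τ i = l := by rw [hi, hτσ]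
          exact hl this.symm
        rw [h1]
        simp [Pi.single_apply, Ne.symm hl]
    -- the square relation
    have hsq : ∀ i, ψ (graphSq k G₁ i) = (α i * α i) • graphSq k G₂ (τ i) := by
      intro i
      have h1 : graphSq k G₁ i = graphMul k G₁ (Pi.single i 1) (Pi.single i 1) := by
        rw [graphMul_single, if_pos rfl]
      rw [h1, hψ]
      show graphMul k G₂ (E i) (E i) = _
      rw [hE i, LinearMap.map_smul₂, map_smul, graphMul_single, if_pos rfl, smul_smul]
    -- vertices map to vertices
    have hvert : ∀ v : V₁, ∃ w : V₂, τ (Sum.inl v) = Sum.inl w ∧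
        E (Sum.inl v) = Pi.single (Sum.inl w) 1 := by
      intro v
      have h1 : ψ (graphSq k G₁ (Sum.inl v)) =
          α (Sum.inl v) • (Pi.single (τ (Sum.inl v)) 1 : (V₂ ⊕ ↥G₂.edgeSet) → k) := by
        have : graphSq k G₁ (Sum.inl v) = Pi.single (Sum.inl v) 1 := rfl
        rw [this, ← hE]
      have h2 := hsq (Sum.inl v)
      rw [h1] at h2
      rcases hc : τ (Sum.inl v) with w | f
      · refine ⟨w, rfl, ?_⟩
        rw [hc] at h2
        have hthis := congrFun h2 (Sum.inl w)
        simp only [Pi.smul_apply, smul_eq_mul, graphSq_inl_apply, if_pos rfl,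
          Pi.single_apply, mul_one, if_true] at hthis
        -- hthis : α = α * α (up to shape)
        have hα1 : α (Sum.inl v) = 1 := by
          have hne := hα (Sum.inl v)
          have h3 : α (Sum.inl v) * α (Sum.inl v) = α (Sum.inl v) * 1 := by
            rw [mul_one]
            exact hthis.symm
          exact mul_left_cancel₀ hne h3
        rw [hE (Sum.inl v), hα1, one_smul, hc]
      · exfalso
        rw [hc] at h2
        obtain ⟨u, hu⟩ : ∃ u : V₂, u ∈ (f : Sym2 V₂) := ⟨(f : Sym2 V₂).out.1, Sym2.out_fst_mem _⟩
        have hthis := congrFun h2 (Sum.inl u)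
        simp only [Pi.smul_apply, smul_eq_mul, Pi.single_apply,
          graphSq_inr_apply_inl, if_pos hu, mul_one, reduceCtorEq, if_false,
          mul_zero] at hthis
        exact hα (Sum.inl v) (mul_self_eq_zero.mp hthis.symm)
      -- end hvert
    choose g hg1 hg2 using hvert
    have ginj : Function.Injective g := by
      intro a b hab
      have : τ (Sum.inl a) = τ (Sum.inl b) := by rw [hg1, hg1, hab]
      have := τ.injective this
      exact Sum.inl.injEq a b ▸ (by injection this)
    -- edges map to edges
    have hedge : ∀ e : ↥G₁.edgeSet, ∃ f : ↥G₂.edgeSet, τ (Sum.inr e) = Sum.inr f ∧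
        ∀ u : V₂, u ∈ (f : Sym2 V₂) ↔ ∃ v, v ∈ (e : Sym2 V₁) ∧ g v = u := by
      intro e
      have hLHS : ψ (graphSq k G₁ (Sum.inr e)) =
          α (Sum.inr e) • (Pi.single (τ (Sum.inr e)) 1 : (V₂ ⊕ ↥G₂.edgeSet) → k) +
            ∑ v ∈ Finset.univ.filter (· ∈ (e : Sym2 V₁)), Pi.single (Sum.inl (g v)) 1 := by
        have h0 : graphSq k G₁ (Sum.inr e) = Pi.single (Sum.inr e) 1 +
            ∑ v ∈ Finset.univ.filter (· ∈ (e : Sym2 V₁)),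
              (Pi.single (Sum.inl v) 1 : (V₁ ⊕ ↥G₁.edgeSet) → k) := rfl
        rw [h0, map_add, map_sum]
        congr 1
        · rw [show ψ (Pi.single (Sum.inr e) 1) = E (Sum.inr e) from rfl, hE]
        · exact Finset.sum_congr rfl fun v _ => by
            rw [show ψ (Pi.single (Sum.inl v) 1) = E (Sum.inl v) from rfl, hg2]
      have h2 := hsq (Sum.inr e)
      rw [hLHS] at h2
      obtain ⟨a, b, hab, hadj⟩ : ∃ a b, (e : Sym2 V₁) = s(a, b) ∧ G₁.Adj a b := by
        obtain ⟨s, hs⟩ := e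
        induction s using Sym2.ind with
        | _ a b => exact ⟨a, b, rfl, hs⟩
      have habne : a ≠ b := hadj.ne
      rcases hc : τ (Sum.inr e) with u | f
      · exfalso
        rw [hc] at h2
        -- pick v ∈ {a,b} with g v ≠ u
        obtain ⟨v, hv, hgv⟩ : ∃ v, v ∈ (e : Sym2 V₁) ∧ g v ≠ u := by
          rcases eq_or_ne (g a) u with h | h
          · exact ⟨b, by rw [hab]; simp, fun hb => habne (ginj (by rw [hb, ← h]))⟩
          · exact ⟨a, by rw [hab]; simp, h⟩
        have this := congrFun h2 (Sum.inl (g v))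
        simp only [Pi.add_apply, Pi.smul_apply, smul_eq_mul, Pi.single_apply,
          Finset.sum_apply, graphSq_inl_apply, Sum.inl.injEq] at this
        rw [if_neg hgv] at this
        simp only [mul_zero, zero_add] at this
        rw [Finset.sum_congr rfl (fun w hw => by
          rw [show ((if g v = g w then (1:k) else 0) = if w = v then 1 else 0) from by
            by_cases hwv : w = v
            · simp [hwv]
            · rw [if_neg (fun hc' => hwv (ginj hc').symm), if_neg hwv]])] at this
        rw [Finset.sum_ite_eq' (Finset.univ.filter (· ∈ (e : Sym2 V₁))) v
          (fun _ => (1:k))] at this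
        rw [if_pos (by simp [hv])] at this
        exact one_ne_zero this
      · -- τ (inr e) = inr f
        rw [hc] at h2
        have hα1 : α (Sum.inr e) = 1 := by
          have := congrFun h2 (Sum.inr f)
          simp only [Pi.add_apply, Pi.smul_apply, smul_eq_mul, Pi.single_apply,
            Finset.sum_apply, graphSq_apply_inr, if_pos rfl, mul_one, if_true] at this
          rw [Finset.sum_eq_zero (fun w _ => by simp), add_zero] at this
          have hne := hα (Sum.inr e)
          have h3 : α (Sum.inr e) * α (Sum.inr e) = α (Sum.inr e) * 1 := by
            rw [mul_one]
            exact this.symm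
          exact mul_left_cancel₀ hne h3
        refine ⟨f, rfl, fun u => ?_⟩
        have hval := congrFun h2 (Sum.inl u)
        rw [hα1] at hval
        simp only [Pi.add_apply, Pi.smul_apply, smul_eq_mul, Pi.single_apply,
          Finset.sum_apply, graphSq_inr_apply_inl, one_mul, one_smul, Sum.inl.injEq,
          reduceCtorEq, if_false, zero_add] at hval
        -- hval : ∑ v ∈ filter, (if inl u = inl (g v) then 1 else 0) = if u ∈ f then 1 else 0
        constructor
        · intro hu
          rw [if_pos hu] at hval
          have hne : (∑ v ∈ Finset.univ.filter (· ∈ (e : Sym2 V₁)),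
              if u = g v then (1:k) else 0) ≠ 0 := by
            rw [hval]; exact one_ne_zero
          obtain ⟨v, hv, hvne⟩ := Finset.exists_ne_zero_of_sum_ne_zero hne
          refine ⟨v, (Finset.mem_filter.mp hv).2, ?_⟩
          by_contra hgu
          rw [if_neg (fun hc' => hgu hc'.symm)] at hvne
          exact hvne rfl
        · rintro ⟨v, hv, rfl⟩
          by_contra hu
          rw [if_neg hu] at hval
          rw [Finset.sum_congr rfl (fun w hw => by
            rw [show ((if g v = g w then (1:k) else 0)
                = if w = v then 1 else 0) from by
              by_cases hwv : w = v
              · simp [hwv]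
              · rw [if_neg (fun hc' => hwv (ginj hc').symm), if_neg hwv]])] at hval
          rw [Finset.sum_ite_eq' (Finset.univ.filter (· ∈ (e : Sym2 V₁))) v
            (fun _ => (1:k))] at hval
          rw [if_pos (by simp [hv])] at hval
          exact one_ne_zero hval
    choose F hF1 hF2 using hedge
    -- g is surjective
    have gsurj : Function.Surjective g := by
      intro w
      obtain ⟨x, hx⟩ := τ.surjective (Sum.inl w)
      cases x with
      | inl v =>
        refine ⟨v, ?_⟩
        rw [hg1] at hx
        injection hx
      | inr e =>
        rw [hF1] at hx
        exact absurd hx (by simp)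
    have gbij : Function.Bijective g := ⟨ginj, gsurj⟩
    -- build the graph isomorphism
    refine ⟨⟨Equiv.ofBijective g gbij, ?_⟩⟩
    intro a b
    show G₂.Adj (g a) (g b) ↔ G₁.Adj a b
    constructor
    · intro hadj
      -- use surjectivity of the edge map
      obtain ⟨x, hx⟩ := τ.surjective (Sum.inr (⟨s(g a, g b), hadj⟩ : ↥G₂.edgeSet))
      cases x with
      | inl v =>
        rw [hg1] at hx
        exact absurd hx (by simp)
      | inr e =>
        rw [hF1] at hx
        have hfe : F e = ⟨s(g a, g b), hadj⟩ := by injection hx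
        have hmem : ∀ u : V₂, u ∈ (F e : Sym2 V₂) ↔ ∃ v, v ∈ (e : Sym2 V₁) ∧ g v = u := hF2 e
        have hga : g a ∈ (F e : Sym2 V₂) := by rw [hfe]; simp
        have hgb : g b ∈ (F e : Sym2 V₂) := by rw [hfe]; simp
        obtain ⟨va, hva, hgva⟩ := (hmem (g a)).mp hga
        obtain ⟨vb, hvb, hgvb⟩ := (hmem (g b)).mp hgb
        have hva' : va = a := ginj hgva
        have hvb' : vb = b := ginj hgvb
        rw [hva'] at hva
        rw [hvb'] at hvb
        have habne : a ≠ b := fun h => hadj.ne (by rw [h])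
        have : (e : Sym2 V₁) = s(a, b) := (Sym2.mem_and_mem_iff habne).mp ⟨hva, hvb⟩
        have he := e.prop
        rw [this] at he
        exact he
    · intro hadj
      set e : ↥G₁.edgeSet := ⟨s(a, b), hadj⟩ with hedef
      have hga : g a ∈ (F e : Sym2 V₂) := (hF2 e (g a)).mpr ⟨a, by simp [hedef], rfl⟩
      have hgb : g b ∈ (F e : Sym2 V₂) := (hF2 e (g b)).mpr ⟨b, by simp [hedef], rfl⟩
      have hne : g a ≠ g b := fun h => hadj.ne (ginj h)
      have : (F e : Sym2 V₂) = s(g a, g b) := (Sym2.mem_and_mem_iff hne).mp ⟨hga, hgb⟩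
      have hp := (F e).prop
      rw [this] at hp
      exact hp
  · rintro ⟨φ⟩
    set ι : (V₁ ⊕ ↥G₁.edgeSet) ≃ (V₂ ⊕ ↥G₂.edgeSet) :=
      Equiv.sumCongr φ.toEquiv φ.mapEdgeSet with hιdef
    have hSq : ∀ i j, graphSq k G₂ (ι i) (ι j) = graphSq k G₁ i j := by
      intro i j
      cases i with
      | inl v =>
        cases j with
        | inl w =>
          simp only [hιdef, Equiv.sumCongr_apply, Sum.map_inl]
          rw [graphSq_inl_apply, graphSq_inl_apply]
          simp [φ.injective.eq_iff]
        | inr f =>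
          simp only [hιdef, Equiv.sumCongr_apply, Sum.map_inl, Sum.map_inr]
          rw [graphSq_inl_apply, graphSq_inl_apply]
          simp
      | inr e =>
        cases j with
        | inl w =>
          simp only [hιdef, Equiv.sumCongr_apply, Sum.map_inl, Sum.map_inr]
          rw [graphSq_inr_apply_inl, graphSq_inr_apply_inl]
          congr 1
          simp only [eq_iff_iff]
          constructor
          · intro h
            simp only [SimpleGraph.Iso.mapEdgeSet_apply, SimpleGraph.Hom.mapEdgeSet_coe,
              Sym2.mem_map] at h
            obtain ⟨w', hw', hww⟩ := h
            rwa [← φ.injective hww]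
          · intro h
            simp only [SimpleGraph.Iso.mapEdgeSet_apply, SimpleGraph.Hom.mapEdgeSet_coe,
              Sym2.mem_map]
            exact ⟨w, h, rfl⟩
        | inr f =>
          simp only [hιdef, Equiv.sumCongr_apply, Sum.map_inr]
          rw [graphSq_apply_inr, graphSq_apply_inr]
          simp only [Sum.inr.injEq]
          by_cases hef : e = f
          · simp [hef]
          · rw [if_neg (fun hmap => hef (φ.mapEdgeSet.injective hmap)), if_neg hef]
    refine ⟨LinearEquiv.funCongrLeft k k ι.symm, fun x y => ?_⟩
    funext j
    have happ : ∀ (z : (V₁ ⊕ ↥G₁.edgeSet) → k),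
        (LinearEquiv.funCongrLeft k k ι.symm) z = fun l => z (ι.symm l) := fun z => rfl
    simp only [happ]
    rw [graphMul_apply, graphMul_apply]
    rw [← Equiv.sum_comp ι (fun i => x (ι.symm i) * y (ι.symm i) * graphSq k G₂ i j)]
    refine Finset.sum_congr rfl fun i _ => ?_
    rw [ι.symm_apply_apply]
    congr 1
    have := hSq i (ι.symm j)
    rw [ι.apply_symm_apply] at this
    exact this.symm
end
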